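/- arXiv:2205.08596 — 4 statements merged into one kernel-verified Lean document; each statement's English description precedes it below -/
import Mathlib

section
/- Let H be a Hopf algebra over a field k. The category PMod^H of partial H-comodules has a generator, i.e., there exists a partial H-comodule G such that for any two distinct parallel morphisms f, g : M → N in PMod^H there is a morphism h : G → M with f∘h ≠ g∘h. -/
open TensorProduct CategoryTheory CategoryTheory.Limits
noncomputable section
universe u
variable (k : Type u) [Field k] (H : Type u) [Ring H] [HopfAlgebra k H]

def mulLast (X : Type u) [AddCommGroup X] [Module k X] :
    ((X ⊗[k] H) ⊗[k] H) →ₗ[k] X ⊗[k] H :=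
  (LinearMap.lTensor X (LinearMap.mul' k H)) ∘ₗ (TensorProduct.assoc k X H H).toLinearMap

def comulLast (X : Type u) [AddCommGroup X] [Module k X] :
    (X ⊗[k] H) →ₗ[k] (X ⊗[k] H) ⊗[k] H :=
  (TensorProduct.assoc k X H H).symm.toLinearMap ∘ₗ LinearMap.lTensor X Coalgebra.comul

def antLast (X : Type u) [AddCommGroup X] [Module k X] :
    (X ⊗[k] H) →ₗ[k] X ⊗[k] H :=
  LinearMap.lTensor X (HopfAlgebra.antipode (R := k) (A := H))

def counitLast (X : Type u) [AddCommGroup X] [Module k X] :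
    (X ⊗[k] H) →ₗ[k] X :=
  (TensorProduct.rid k X).toLinearMap ∘ₗ LinearMap.lTensor X Coalgebra.counit

structure IsPartialComodule {M : Type u} [AddCommGroup M] [Module k M]
    (ρ : M →ₗ[k] M ⊗[k] H) : Prop where
  counit : counitLast k H M ∘ₗ ρ = LinearMap.id
  pcm2 :
    mulLast k H (M ⊗[k] H) ∘ₗ antLast k H ((M ⊗[k] H) ⊗[k] H) ∘ₗ
        LinearMap.rTensor H (comulLast k H M) ∘ₗ LinearMap.rTensor H ρ ∘ₗ ρ =
    mulLast k H (M ⊗[k] H) ∘ₗ antLast k H ((M ⊗[k] H) ⊗[k] H) ∘ₗ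
        LinearMap.rTensor H (LinearMap.rTensor H ρ) ∘ₗ LinearMap.rTensor H ρ ∘ₗ ρ
  pcm3 :
    LinearMap.rTensor H (mulLast k H M) ∘ₗ LinearMap.rTensor H (antLast k H (M ⊗[k] H)) ∘ₗ
        comulLast k H (M ⊗[k] H) ∘ₗ LinearMap.rTensor H ρ ∘ₗ ρ =
    LinearMap.rTensor H (mulLast k H M) ∘ₗ LinearMap.rTensor H (antLast k H (M ⊗[k] H)) ∘ₗ
        LinearMap.rTensor H (LinearMap.rTensor H ρ) ∘ₗ LinearMap.rTensor H ρ ∘ₗ ρ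

/-- Objects of the category `PMod^H` of right partial `H`-comodules. -/
structure PComod where
  carrier : Type u
  [isAddCommGroup : AddCommGroup carrier]
  [isModule : Module k carrier]
  ρ : carrier →ₗ[k] carrier ⊗[k] H
  isPartialComodule : IsPartialComodule k H ρ

attribute [instance] PComod.isAddCommGroup PComod.isModule

variable {k H}

/-- Morphisms of partial comodules: linear maps commuting with the coactions. -/
instance : Category.{u} (PComod k H) where
  Hom A B := { f : A.carrier →ₗ[k] B.carrier // LinearMap.rTensor H f ∘ₗ A.ρ = B.ρ ∘ₗ f }
  id A := ⟨LinearMap.id, by simp [LinearMap.rTensor_id]⟩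
  comp {A B C} f g := ⟨g.1 ∘ₗ f.1, by
    rw [LinearMap.rTensor_comp, LinearMap.comp_assoc, f.2, ← LinearMap.comp_assoc, g.2,
      LinearMap.comp_assoc]⟩
  id_comp f := by apply Subtype.ext; simp
  comp_id f := by apply Subtype.ext; simp
  assoc f g h := by apply Subtype.ext; simp [LinearMap.comp_assoc]

variable (k H)

/-- The forgetful functor from partial `H`-comodules to vector spaces. -/
def pforget : PComod k H ⥤ ModuleCat.{u} k where
  obj A := ModuleCat.of k A.carrier
  map f := ModuleCat.ofHom f.1
  map_id _ := rfl
  map_comp _ _ := rfl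

section Aux

open LinearMap

variable {k H}
variable {X Y : Type u} [AddCommGroup X] [Module k X] [AddCommGroup Y] [Module k Y]

lemma nat_counit (f : X →ₗ[k] Y) :
    counitLast k H Y ∘ₗ rTensor H f = f ∘ₗ counitLast k H X := by
  apply TensorProduct.ext'
  intro x h
  simp [counitLast, TensorProduct.rid_tmul]

lemma nat_ant (f : X →ₗ[k] Y) :
    antLast k H Y ∘ₗ rTensor H f = rTensor H f ∘ₗ antLast k H X := by
  apply TensorProduct.ext'
  intro x h
  simp [antLast]

lemma nat_mul (f : X →ₗ[k] Y) :
    mulLast k H Y ∘ₗ rTensor H (rTensor H f) = rTensor H f ∘ₗ mulLast k H X := by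
  apply TensorProduct.ext_threefold
  intro x h1 h2
  simp [mulLast]

lemma nat_comul (f : X →ₗ[k] Y) :
    comulLast k H Y ∘ₗ rTensor H f = rTensor H (rTensor H f) ∘ₗ comulLast k H X := by
  apply TensorProduct.ext'
  intro x h
  simp only [LinearMap.comp_apply, rTensor_tmul, comulLast, LinearEquiv.coe_coe, lTensor_tmul,
    LinearMap.coe_comp, Function.comp_apply]
  induction Coalgebra.comul (R := k) h using TensorProduct.induction_on with
  | zero => simp
  | tmul a b => simp
  | add a b ha hb => simp only [TensorProduct.tmul_add, map_add, ha, hb]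

end Aux
section Aux2

open LinearMap

variable {k H}
variable {X Y : Type u} [AddCommGroup X] [Module k X] [AddCommGroup Y] [Module k Y]

lemma rT_rT_nat (f : X →ₗ[k] Y) (ρX : X →ₗ[k] X ⊗[k] H) (ρY : Y →ₗ[k] Y ⊗[k] H)
    (hf : rTensor H f ∘ₗ ρX = ρY ∘ₗ f) :
    rTensor H ρY ∘ₗ rTensor H f = rTensor H (rTensor H f) ∘ₗ rTensor H ρX := by
  rw [← rTensor_comp, ← hf, rTensor_comp]

lemma chain_nat (f : X →ₗ[k] Y) (ρX : X →ₗ[k] X ⊗[k] H) (ρY : Y →ₗ[k] Y ⊗[k] H)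
    (hf : rTensor H f ∘ₗ ρX = ρY ∘ₗ f)
    (PX : ((X ⊗[k] H) ⊗[k] H) ⊗[k] H →ₗ[k] (X ⊗[k] H) ⊗[k] H)
    (PY : ((Y ⊗[k] H) ⊗[k] H) ⊗[k] H →ₗ[k] (Y ⊗[k] H) ⊗[k] H)
    (QX : ((X ⊗[k] H) ⊗[k] H) ⊗[k] H →ₗ[k] ((X ⊗[k] H) ⊗[k] H) ⊗[k] H)
    (QY : ((Y ⊗[k] H) ⊗[k] H) ⊗[k] H →ₗ[k] ((Y ⊗[k] H) ⊗[k] H) ⊗[k] H)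
    (RX : (X ⊗[k] H) ⊗[k] H →ₗ[k] ((X ⊗[k] H) ⊗[k] H) ⊗[k] H)
    (RY : (Y ⊗[k] H) ⊗[k] H →ₗ[k] ((Y ⊗[k] H) ⊗[k] H) ⊗[k] H)
    (hP : PY ∘ₗ rTensor H (rTensor H (rTensor H f)) = rTensor H (rTensor H f) ∘ₗ PX)
    (hQ : QY ∘ₗ rTensor H (rTensor H (rTensor H f)) =
      rTensor H (rTensor H (rTensor H f)) ∘ₗ QX)
    (hR : RY ∘ₗ rTensor H (rTensor H f) = rTensor H (rTensor H (rTensor H f)) ∘ₗ RX) :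
    (PY ∘ₗ QY ∘ₗ RY ∘ₗ rTensor H ρY ∘ₗ ρY) ∘ₗ f =
      rTensor H (rTensor H f) ∘ₗ (PX ∘ₗ QX ∘ₗ RX ∘ₗ rTensor H ρX ∘ₗ ρX) := by
  have h1 := fun t => LinearMap.congr_fun (rT_rT_nat f ρX ρY hf) t
  have hf' := fun t => LinearMap.congr_fun hf t
  have hR' := fun t => LinearMap.congr_fun hR t
  have hQ' := fun t => LinearMap.congr_fun hQ t
  have hP' := fun t => LinearMap.congr_fun hP t
  simp only [LinearMap.comp_apply] at h1 hf' hR' hQ' hP'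
  apply LinearMap.ext
  intro m
  simp only [LinearMap.comp_apply]
  rw [← hf' m, h1 (ρX m), hR' _, hQ' _, hP' _]

/-- The four PCM-axiom chains are natural in comodule morphisms. -/
lemma pcm2L_nat (f : X →ₗ[k] Y) (ρX : X →ₗ[k] X ⊗[k] H) (ρY : Y →ₗ[k] Y ⊗[k] H)
    (hf : rTensor H f ∘ₗ ρX = ρY ∘ₗ f) :
    (mulLast k H (Y ⊗[k] H) ∘ₗ antLast k H ((Y ⊗[k] H) ⊗[k] H) ∘ₗ
        rTensor H (comulLast k H Y) ∘ₗ rTensor H ρY ∘ₗ ρY) ∘ₗ f =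
      rTensor H (rTensor H f) ∘ₗ (mulLast k H (X ⊗[k] H) ∘ₗ antLast k H ((X ⊗[k] H) ⊗[k] H) ∘ₗ
        rTensor H (comulLast k H X) ∘ₗ rTensor H ρX ∘ₗ ρX) :=
  chain_nat f ρX ρY hf _ _ _ _ _ _ (nat_mul (rTensor H f)) (nat_ant (rTensor H (rTensor H f)))
    (by rw [← rTensor_comp, nat_comul f, rTensor_comp])

lemma pcm2R_nat (f : X →ₗ[k] Y) (ρX : X →ₗ[k] X ⊗[k] H) (ρY : Y →ₗ[k] Y ⊗[k] H)
    (hf : rTensor H f ∘ₗ ρX = ρY ∘ₗ f) :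
    (mulLast k H (Y ⊗[k] H) ∘ₗ antLast k H ((Y ⊗[k] H) ⊗[k] H) ∘ₗ
        rTensor H (rTensor H ρY) ∘ₗ rTensor H ρY ∘ₗ ρY) ∘ₗ f =
      rTensor H (rTensor H f) ∘ₗ (mulLast k H (X ⊗[k] H) ∘ₗ antLast k H ((X ⊗[k] H) ⊗[k] H) ∘ₗ
        rTensor H (rTensor H ρX) ∘ₗ rTensor H ρX ∘ₗ ρX) :=
  chain_nat f ρX ρY hf _ _ _ _ _ _ (nat_mul (rTensor H f)) (nat_ant (rTensor H (rTensor H f)))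
    (by rw [← rTensor_comp, rT_rT_nat f ρX ρY hf, rTensor_comp])

lemma pcm3L_nat (f : X →ₗ[k] Y) (ρX : X →ₗ[k] X ⊗[k] H) (ρY : Y →ₗ[k] Y ⊗[k] H)
    (hf : rTensor H f ∘ₗ ρX = ρY ∘ₗ f) :
    (rTensor H (mulLast k H Y) ∘ₗ rTensor H (antLast k H (Y ⊗[k] H)) ∘ₗ
        comulLast k H (Y ⊗[k] H) ∘ₗ rTensor H ρY ∘ₗ ρY) ∘ₗ f =
      rTensor H (rTensor H f) ∘ₗ (rTensor H (mulLast k H X) ∘ₗ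
        rTensor H (antLast k H (X ⊗[k] H)) ∘ₗ
        comulLast k H (X ⊗[k] H) ∘ₗ rTensor H ρX ∘ₗ ρX) :=
  chain_nat f ρX ρY hf _ _ _ _ _ _
    (by rw [← rTensor_comp, nat_mul f, rTensor_comp])
    (by rw [← rTensor_comp, nat_ant (rTensor H f), rTensor_comp])
    (nat_comul (rTensor H f))

lemma pcm3R_nat (f : X →ₗ[k] Y) (ρX : X →ₗ[k] X ⊗[k] H) (ρY : Y →ₗ[k] Y ⊗[k] H)
    (hf : rTensor H f ∘ₗ ρX = ρY ∘ₗ f) :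
    (rTensor H (mulLast k H Y) ∘ₗ rTensor H (antLast k H (Y ⊗[k] H)) ∘ₗ
        rTensor H (rTensor H ρY) ∘ₗ rTensor H ρY ∘ₗ ρY) ∘ₗ f =
      rTensor H (rTensor H f) ∘ₗ (rTensor H (mulLast k H X) ∘ₗ
        rTensor H (antLast k H (X ⊗[k] H)) ∘ₗ
        rTensor H (rTensor H ρX) ∘ₗ rTensor H ρX ∘ₗ ρX) :=
  chain_nat f ρX ρY hf _ _ _ _ _ _
    (by rw [← rTensor_comp, nat_mul f, rTensor_comp])
    (by rw [← rTensor_comp, nat_ant (rTensor H f), rTensor_comp])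
    (by rw [← rTensor_comp, rT_rT_nat f ρX ρY hf, rTensor_comp])

lemma isPartialComodule_of_injective (f : X →ₗ[k] Y) (hinj : Function.Injective f)
    (ρX : X →ₗ[k] X ⊗[k] H) (ρY : Y →ₗ[k] Y ⊗[k] H)
    (hf : rTensor H f ∘ₗ ρX = ρY ∘ₗ f) (hY : IsPartialComodule k H ρY) :
    IsPartialComodule k H ρX := by
  have hinj2 : Function.Injective (rTensor H (rTensor H f) :
      (X ⊗[k] H) ⊗[k] H →ₗ[k] (Y ⊗[k] H) ⊗[k] H) :=
    Module.Flat.rTensor_preserves_injective_linearMap _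
      (Module.Flat.rTensor_preserves_injective_linearMap _ hinj)
  constructor
  · apply LinearMap.ext
    intro m
    apply hinj
    have h1 := LinearMap.congr_fun (nat_counit (k := k) (H := H) f) (ρX m)
    simp only [LinearMap.comp_apply] at h1 ⊢
    rw [← h1, ← LinearMap.comp_apply (rTensor H f), hf, LinearMap.comp_apply,
      ← LinearMap.comp_apply (counitLast k H Y), hY.counit]
    rfl
  · apply LinearMap.ext
    intro m
    apply hinj2
    have h1 := LinearMap.congr_fun (pcm2L_nat f ρX ρY hf) m
    have h2 := LinearMap.congr_fun (pcm2R_nat f ρX ρY hf) m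
    have h3 := LinearMap.congr_fun hY.pcm2 (f m)
    simp only [LinearMap.comp_apply] at h1 h2 h3 ⊢
    rw [← h1, ← h2]
    exact h3
  · apply LinearMap.ext
    intro m
    apply hinj2
    have h1 := LinearMap.congr_fun (pcm3L_nat f ρX ρY hf) m
    have h2 := LinearMap.congr_fun (pcm3R_nat f ρX ρY hf) m
    have h3 := LinearMap.congr_fun hY.pcm3 (f m)
    simp only [LinearMap.comp_apply] at h1 h2 h3 ⊢
    rw [← h1, ← h2]
    exact h3

end Aux2
section Aux3
open LinearMap

variable {k H}
variable {M : Type u} [AddCommGroup M] [Module k M]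

lemma range_rT_mono {W₁ W₂ : Submodule k M} (h : W₁ ≤ W₂) :
    LinearMap.range (rTensor H W₁.subtype) ≤ LinearMap.range (rTensor H W₂.subtype) := by
  rintro _ ⟨t, rfl⟩
  refine ⟨rTensor H (Submodule.inclusion h) t, ?_⟩
  rw [← LinearMap.comp_apply, ← rTensor_comp, Submodule.subtype_comp_inclusion]

lemma exists_fin_components (t : M ⊗[k] H) :
    ∃ F : Finset M, t ∈ LinearMap.range (rTensor H (Submodule.span k (F : Set M)).subtype) := by
  classical
  obtain ⟨S, hS⟩ := TensorProduct.exists_finset t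
  refine ⟨S.image Prod.fst, ?_⟩
  rw [hS]
  apply Submodule.sum_mem
  intro p hp
  refine ⟨(⟨p.1, Submodule.subset_span ?_⟩ : Submodule.span k ((S.image Prod.fst : Finset M) :
    Set M)) ⊗ₜ[k] p.2, by simp [rTensor_tmul]⟩
  simpa using ⟨p.2, hp⟩

/-- every element of a partial comodule lies in a countably-generated
subspace which is stable under the coaction. -/
lemma exists_countable_stable (ρ : M →ₗ[k] M ⊗[k] H) (m : M) :
    ∃ s : Set M, s.Countable ∧ s.Nonempty ∧ m ∈ s ∧
      ∀ x ∈ Submodule.span k s,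
        ρ x ∈ LinearMap.range (rTensor H (Submodule.span k s).subtype) := by
  choose F hF using fun x : M => exists_fin_components (k := k) (H := H) (ρ x)
  let S : ℕ → Set M := fun n => Nat.rec {m} (fun _ s => s ∪ ⋃ x ∈ s, (F x : Set M)) n
  have hmono : ∀ n, S n ⊆ S (n + 1) := fun n => Set.subset_union_left
  have hcount : ∀ n, (S n).Countable := by
    intro n
    induction n with
    | zero => exact Set.countable_singleton m
    | succ n ih =>
      exact ih.union (ih.biUnion fun x _ => (F x).countable_toSet)
  refine ⟨⋃ n, S n, Set.countable_iUnion hcount, ⟨m, Set.mem_iUnion.2 ⟨0, rfl⟩⟩,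
    Set.mem_iUnion.2 ⟨0, rfl⟩, ?_⟩
  intro x hx
  have : Submodule.span k (⋃ n, S n) ≤
      Submodule.comap ρ (LinearMap.range (rTensor H (Submodule.span k (⋃ n, S n)).subtype)) := by
    rw [Submodule.span_le]
    intro y hy
    obtain ⟨n, hn⟩ := Set.mem_iUnion.1 hy
    have hsub : (F y : Set M) ⊆ ⋃ n, S n := by
      intro z hz
      exact Set.mem_iUnion.2 ⟨n + 1, Set.mem_union_right _ (Set.mem_biUnion hn hz)⟩
    exact range_rT_mono (Submodule.span_mono hsub) (hF y)
  exact this hx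

end Aux3
section Aux4

open LinearMap

/-- Index type for the generator: all partial comodule structures on quotients of `ℕ →₀ k`. -/
def Idx : Type u :=
  Σ U : Submodule k (ℕ →₀ k),
    { ρ : ((ℕ →₀ k) ⧸ U) →ₗ[k] ((ℕ →₀ k) ⧸ U) ⊗[k] H // IsPartialComodule k H ρ }

variable {k H}

lemma exists_component (M : PComod k H) (m : M.carrier) :
    ∃ (i : Idx k H) (φ : ((ℕ →₀ k) ⧸ i.1) →ₗ[k] M.carrier) (x : (ℕ →₀ k) ⧸ i.1),
      rTensor H φ ∘ₗ i.2.1 = M.ρ ∘ₗ φ ∧ φ x = m := by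
  obtain ⟨s, hsc, hsne, hms, hstab⟩ := exists_countable_stable M.ρ m
  set W := Submodule.span k s with hWdef
  have hinjW : Function.Injective (rTensor H W.subtype) :=
    Module.Flat.rTensor_preserves_injective_linearMap _ W.injective_subtype
  set eW := LinearEquiv.ofInjective (rTensor H W.subtype) hinjW with heW
  have key : ∀ y : LinearMap.range (rTensor H W.subtype),
      rTensor H W.subtype (eW.symm y) = (y : M.carrier ⊗[k] H) := by
    intro y
    calc rTensor H W.subtype (eW.symm y) = ((eW (eW.symm y) : _) : M.carrier ⊗[k] H) :=
          (LinearEquiv.ofInjective_apply _ _).symm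
      _ = (y : M.carrier ⊗[k] H) := by rw [eW.apply_symm_apply]
  set ρW : W →ₗ[k] W ⊗[k] H :=
    eW.symm.toLinearMap ∘ₗ LinearMap.codRestrict _ (M.ρ ∘ₗ W.subtype)
      (fun x => hstab x x.2) with hρW
  have hW : rTensor H W.subtype ∘ₗ ρW = M.ρ ∘ₗ W.subtype := by
    apply LinearMap.ext
    intro x
    simp only [hρW, LinearMap.comp_apply, LinearEquiv.coe_coe]
    rw [key]
    simp
    rfl
  have hpcW : IsPartialComodule k H ρW :=
    isPartialComodule_of_injective W.subtype W.injective_subtype ρW M.ρ hW M.isPartialComodule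
  -- surjection from ℕ →₀ k onto W
  obtain ⟨σ, hσ⟩ := hsc.exists_eq_range hsne
  have hrange : LinearMap.range (Finsupp.linearCombination k σ) = W := by
    rw [Finsupp.range_linearCombination, hWdef, hσ]
  set q' : (ℕ →₀ k) →ₗ[k] W :=
    LinearMap.codRestrict W (Finsupp.linearCombination k σ)
      (fun v => hrange ▸ LinearMap.mem_range_self _ v) with hq'
  have hsurj : Function.Surjective q' := by
    intro w
    have hw : (w : M.carrier) ∈ LinearMap.range (Finsupp.linearCombination k σ) := by
      rw [hrange]; exact w.2
    obtain ⟨v, hv⟩ := hw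
    exact ⟨v, Subtype.ext (by simpa [hq'] using hv)⟩
  set e : ((ℕ →₀ k) ⧸ LinearMap.ker q') ≃ₗ[k] W := q'.quotKerEquivOfSurjective hsurj with hedef
  set Q := (ℕ →₀ k) ⧸ LinearMap.ker q' with hQdef
  have hee : e.toLinearMap ∘ₗ e.symm.toLinearMap = LinearMap.id := by
    apply LinearMap.ext; intro y; simp
  set ρQ : Q →ₗ[k] Q ⊗[k] H := rTensor H e.symm.toLinearMap ∘ₗ ρW ∘ₗ e.toLinearMap with hρQ
  have he : rTensor H e.toLinearMap ∘ₗ ρQ = ρW ∘ₗ e.toLinearMap := by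
    rw [hρQ, ← LinearMap.comp_assoc, ← LinearMap.comp_assoc, ← rTensor_comp, hee, rTensor_id,
      LinearMap.id_comp]
  have hpcQ : IsPartialComodule k H ρQ :=
    isPartialComodule_of_injective e.toLinearMap e.injective ρQ ρW he hpcW
  refine ⟨⟨LinearMap.ker q', ⟨ρQ, hpcQ⟩⟩, W.subtype ∘ₗ e.toLinearMap,
    e.symm ⟨m, Submodule.subset_span hms⟩, ?_, ?_⟩
  · rw [rTensor_comp, LinearMap.comp_assoc, he, ← LinearMap.comp_assoc, hW,
      LinearMap.comp_assoc]
  · simp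

end Aux4
section Gen

open LinearMap

instance : DecidableEq (Idx k H) := Classical.decEq _

/-- The carrier of the generator: the direct sum of all partial comodule structures on
quotients of `ℕ →₀ k`. -/
abbrev GenCar : Type u := DirectSum (Idx k H) (fun i => (ℕ →₀ k) ⧸ i.1)

instance : AddCommGroup (GenCar k H) :=
  @DirectSum.instAddCommGroup (Idx k H) _ (fun i => Submodule.Quotient.addCommGroup i.1)

/-- The coaction of the generator. -/
def genρ : GenCar k H →ₗ[k] GenCar k H ⊗[k] H :=
  DirectSum.toModule k (Idx k H) _
    (fun i => rTensor H (DirectSum.lof k (Idx k H) (fun j => (ℕ →₀ k) ⧸ j.1) i) ∘ₗ i.2.1)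

lemma genρ_lof (i : Idx k H) :
    rTensor H (DirectSum.lof k (Idx k H) (fun j => (ℕ →₀ k) ⧸ j.1) i) ∘ₗ i.2.1 =
      genρ k H ∘ₗ DirectSum.lof k (Idx k H) (fun j => (ℕ →₀ k) ⧸ j.1) i := by
  apply LinearMap.ext
  intro x
  simp only [LinearMap.comp_apply, genρ, DirectSum.toModule_lof]

set_option maxHeartbeats 1000000 in
lemma gen_ipc : IsPartialComodule k H (genρ k H) := by
  constructor
  · apply DirectSum.linearMap_ext
    intro i
    apply LinearMap.ext
    intro x
    have h1 := LinearMap.congr_fun (genρ_lof k H i) x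
    have h2 := LinearMap.congr_fun
      (nat_counit (k := k) (H := H) (DirectSum.lof k (Idx k H) (fun j => (ℕ →₀ k) ⧸ j.1) i))
      (i.2.1 x)
    have h3 := LinearMap.congr_fun i.2.2.counit x
    simp only [LinearMap.comp_apply] at h1 h2 h3 ⊢
    rw [← h1, h2, h3]
    rfl
  · apply DirectSum.linearMap_ext
    intro i
    rw [pcm2L_nat (DirectSum.lof k (Idx k H) (fun j => (ℕ →₀ k) ⧸ j.1) i) i.2.1 (genρ k H) (genρ_lof k H i),
      pcm2R_nat (DirectSum.lof k (Idx k H) (fun j => (ℕ →₀ k) ⧸ j.1) i) i.2.1 (genρ k H) (genρ_lof k H i), i.2.2.pcm2]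
  · apply DirectSum.linearMap_ext
    intro i
    rw [pcm3L_nat (DirectSum.lof k (Idx k H) (fun j => (ℕ →₀ k) ⧸ j.1) i) i.2.1 (genρ k H) (genρ_lof k H i),
      pcm3R_nat (DirectSum.lof k (Idx k H) (fun j => (ℕ →₀ k) ⧸ j.1) i) i.2.1 (genρ k H) (genρ_lof k H i), i.2.2.pcm3]

variable {k H}

/-- Map out of the generator induced by a map on one component. -/
def outMap (M : PComod k H) (i : Idx k H) (φ : ((ℕ →₀ k) ⧸ i.1) →ₗ[k] M.carrier) :
    GenCar k H →ₗ[k] M.carrier :=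
  DirectSum.toModule k (Idx k H) _
    (Function.update (fun j => (0 : ((ℕ →₀ k) ⧸ j.1) →ₗ[k] M.carrier)) i φ)

lemma outMap_lof_self (M : PComod k H) (i : Idx k H)
    (φ : ((ℕ →₀ k) ⧸ i.1) →ₗ[k] M.carrier) :
    outMap M i φ ∘ₗ DirectSum.lof k (Idx k H) (fun j => (ℕ →₀ k) ⧸ j.1) i = φ := by
  apply LinearMap.ext
  intro x
  simp only [LinearMap.comp_apply, outMap, DirectSum.toModule_lof, Function.update_self]

lemma outMap_lof_ne (M : PComod k H) (i j : Idx k H) (hj : j ≠ i)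
    (φ : ((ℕ →₀ k) ⧸ i.1) →ₗ[k] M.carrier) :
    outMap M i φ ∘ₗ DirectSum.lof k (Idx k H) (fun j => (ℕ →₀ k) ⧸ j.1) j = 0 := by
  apply LinearMap.ext
  intro x
  simp only [LinearMap.comp_apply, outMap, DirectSum.toModule_lof, Function.update_of_ne hj,
    LinearMap.zero_apply]

lemma outMap_comod (M : PComod k H) (i : Idx k H)
    (φ : ((ℕ →₀ k) ⧸ i.1) →ₗ[k] M.carrier)
    (hφ : rTensor H φ ∘ₗ i.2.1 = M.ρ ∘ₗ φ) :
    rTensor H (outMap M i φ) ∘ₗ genρ k H = M.ρ ∘ₗ outMap M i φ := by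
  apply DirectSum.linearMap_ext
  intro j
  rw [LinearMap.comp_assoc, ← genρ_lof k H j, ← LinearMap.comp_assoc, ← rTensor_comp,
    LinearMap.comp_assoc]
  by_cases hj : j = i
  · subst hj
    rw [outMap_lof_self, hφ]
  · rw [outMap_lof_ne M i j hj, rTensor_zero, LinearMap.zero_comp, LinearMap.comp_zero]

end Gen

/-- The category of partial `H`-comodules has a generator. -/
theorem pcomod_has_generator :
    ∃ G : PComod k H, ∀ (M N : PComod k H) (f g : M ⟶ N), f ≠ g →
      ∃ h : G ⟶ M, h ≫ f ≠ h ≫ g := by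
  refine ⟨⟨GenCar k H, genρ k H, gen_ipc k H⟩, ?_⟩
  intro M N f g hfg
  have hex : ∃ m, f.1 m ≠ g.1 m := by
    by_contra hc
    push_neg at hc
    exact hfg (Subtype.ext (LinearMap.ext hc))
  obtain ⟨m, hm⟩ := hex
  obtain ⟨i, φ, x, hφ, hx⟩ := exists_component M m
  refine ⟨⟨outMap M i φ, outMap_comod M i φ hφ⟩, ?_⟩
  intro hcontra
  apply hm
  have h1 : f.1 (outMap M i φ (DirectSum.lof k (Idx k H) (fun j => (ℕ →₀ k) ⧸ j.1) i x)) =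
      g.1 (outMap M i φ (DirectSum.lof k (Idx k H) (fun j => (ℕ →₀ k) ⧸ j.1) i x)) :=
    congrArg (fun t : (_ ⟶ N) =>
      t.1 (DirectSum.lof k (Idx k H) (fun j => (ℕ →₀ k) ⧸ j.1) i x)) hcontra
  have h2 := LinearMap.congr_fun (outMap_lof_self M i φ) x
  simp only [LinearMap.comp_apply] at h2
  rwa [h2, hx] at h1

end
end

section
/- Let H be a Hopf algebra over a field k and M a partial H-comodule for which there exists a finite subset F ⊆ M such that the only partial subcomodule of M containing F is M itself. Then M is a finitely generated object of the Grothendieck category PMod^H: for every filtered colimit N = colim Nᵢ of monomorphisms in PMod^H, the canonical map colim Hom(M, Nᵢ) → Hom(M, N) is bijective. -/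
open TensorProduct CategoryTheory CategoryTheory.Limits

noncomputable section

universe u

section PartialComodules

variable (k : Type u) [Field k] (H : Type u) [Ring H] [HopfAlgebra k H]

/-- A subspace `N` is a partial subcomodule when it is invariant under the coaction. -/
def IsSubcomodule {M : Type u} [AddCommGroup M] [Module k M]
    (ρ : M →ₗ[k] M ⊗[k] H) (N : Submodule k M) : Prop :=
  ∀ n ∈ N, ρ n ∈ LinearMap.range (LinearMap.rTensor H N.subtype)

end PartialComodules

section Aux

open LinearMap

variable {k : Type u} [Field k] {H : Type u} [Ring H] [HopfAlgebra k H]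
variable {X Y : Type u} [AddCommGroup X] [Module k X] [AddCommGroup Y] [Module k Y]

lemma counitLast_nat (f : Y →ₗ[k] X) :
    counitLast k H X ∘ₗ rTensor H f = f ∘ₗ counitLast k H Y := by
  apply TensorProduct.ext'
  intro y h
  simp [counitLast]

lemma antLast_nat (f : Y →ₗ[k] X) :
    antLast k H X ∘ₗ rTensor H f = rTensor H f ∘ₗ antLast k H Y := by
  simp only [antLast, lTensor_comp_rTensor, rTensor_comp_lTensor]

lemma assoc_nat (f : Y →ₗ[k] X) :
    (TensorProduct.assoc k X H H).toLinearMap ∘ₗ rTensor H (rTensor H f)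
      = rTensor (H ⊗[k] H) f ∘ₗ (TensorProduct.assoc k Y H H).toLinearMap := by
  apply TensorProduct.ext'
  intro z h
  induction z using TensorProduct.induction_on with
  | zero => simp
  | tmul y h' => simp
  | add a b ha hb => simp only [LinearMap.comp_apply, LinearMap.rTensor_tmul] at ha hb; simp only [add_tmul, map_add]; exact congrArg₂ HAdd.hAdd ha hb

lemma assoc_symm_nat (f : Y →ₗ[k] X) :
    (TensorProduct.assoc k X H H).symm.toLinearMap ∘ₗ rTensor (H ⊗[k] H) f
      = rTensor H (rTensor H f) ∘ₗ (TensorProduct.assoc k Y H H).symm.toLinearMap := by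
  apply TensorProduct.ext'
  intro y c
  induction c using TensorProduct.induction_on with
  | zero => simp
  | tmul h h' => simp
  | add a b ha hb => simp only [LinearMap.comp_apply, LinearMap.rTensor_tmul] at ha hb; simp only [tmul_add, map_add]; exact congrArg₂ HAdd.hAdd ha hb

lemma mulLast_nat (f : Y →ₗ[k] X) :
    mulLast k H X ∘ₗ rTensor H (rTensor H f) = rTensor H f ∘ₗ mulLast k H Y := by
  unfold mulLast
  rw [comp_assoc, assoc_nat, ← comp_assoc, ← comp_assoc, lTensor_comp_rTensor, rTensor_comp_lTensor]

lemma comulLast_nat (f : Y →ₗ[k] X) :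
    comulLast k H X ∘ₗ rTensor H f = rTensor H (rTensor H f) ∘ₗ comulLast k H Y := by
  unfold comulLast
  rw [comp_assoc, lTensor_comp_rTensor, ← rTensor_comp_lTensor, ← comp_assoc, assoc_symm_nat,
    comp_assoc]

end Aux

section Aux2

open LinearMap Function

variable {k : Type u} [Field k] {H : Type u} [Ring H] [HopfAlgebra k H]

/-- Rewriting helper: replace a composite `g ∘ f` inside a right-associated chain. -/
private lemma crw {A B C C' E : Type u} [AddCommGroup A] [Module k A]
    [AddCommGroup B] [Module k B] [AddCommGroup C] [Module k C]
    [AddCommGroup C'] [Module k C'] [AddCommGroup E] [Module k E]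
    {f : B →ₗ[k] C} {g : C →ₗ[k] E} {f' : B →ₗ[k] C'} {g' : C' →ₗ[k] E}
    (h : g ∘ₗ f = g' ∘ₗ f') (x : A →ₗ[k] B) :
    g ∘ₗ f ∘ₗ x = g' ∘ₗ f' ∘ₗ x := by
  rw [← LinearMap.comp_assoc, h, LinearMap.comp_assoc]

variable {M N : Type u} [AddCommGroup M] [Module k M] [AddCommGroup N] [Module k N]

/-- Left side of PCM2. -/
def pcmL2 (ρ : M →ₗ[k] M ⊗[k] H) : M →ₗ[k] (M ⊗[k] H) ⊗[k] H :=
  mulLast k H (M ⊗[k] H) ∘ₗ antLast k H ((M ⊗[k] H) ⊗[k] H) ∘ₗ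
    LinearMap.rTensor H (comulLast k H M) ∘ₗ LinearMap.rTensor H ρ ∘ₗ ρ

/-- Right side of PCM2. -/
def pcmR2 (ρ : M →ₗ[k] M ⊗[k] H) : M →ₗ[k] (M ⊗[k] H) ⊗[k] H :=
  mulLast k H (M ⊗[k] H) ∘ₗ antLast k H ((M ⊗[k] H) ⊗[k] H) ∘ₗ
    LinearMap.rTensor H (LinearMap.rTensor H ρ) ∘ₗ LinearMap.rTensor H ρ ∘ₗ ρ

/-- Left side of PCM3. -/
def pcmL3 (ρ : M →ₗ[k] M ⊗[k] H) : M →ₗ[k] (M ⊗[k] H) ⊗[k] H :=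
  LinearMap.rTensor H (mulLast k H M) ∘ₗ LinearMap.rTensor H (antLast k H (M ⊗[k] H)) ∘ₗ
    comulLast k H (M ⊗[k] H) ∘ₗ LinearMap.rTensor H ρ ∘ₗ ρ

/-- Right side of PCM3. -/
def pcmR3 (ρ : M →ₗ[k] M ⊗[k] H) : M →ₗ[k] (M ⊗[k] H) ⊗[k] H :=
  LinearMap.rTensor H (mulLast k H M) ∘ₗ LinearMap.rTensor H (antLast k H (M ⊗[k] H)) ∘ₗ
    LinearMap.rTensor H (LinearMap.rTensor H ρ) ∘ₗ LinearMap.rTensor H ρ ∘ₗ ρ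

lemma isPartialComodule_iff (ρ : M →ₗ[k] M ⊗[k] H) :
    IsPartialComodule k H ρ ↔
      counitLast k H M ∘ₗ ρ = LinearMap.id ∧ pcmL2 ρ = pcmR2 ρ ∧ pcmL3 ρ = pcmR3 ρ :=
  ⟨fun h => ⟨h.counit, h.pcm2, h.pcm3⟩, fun h => ⟨h.1, h.2.1, h.2.2⟩⟩

variable {ρM : M →ₗ[k] M ⊗[k] H} {ρN : N →ₗ[k] N ⊗[k] H}
variable {f : M →ₗ[k] N} (hf : rTensor H f ∘ₗ ρM = ρN ∘ₗ f)

section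
include hf

private lemma h1aux : rTensor H ρN ∘ₗ rTensor H f
    = rTensor H (rTensor H f) ∘ₗ rTensor H ρM := by
  rw [← rTensor_comp, ← hf, rTensor_comp]

private lemma h2aux : rTensor H (rTensor H ρN) ∘ₗ rTensor H (rTensor H f)
    = rTensor H (rTensor H (rTensor H f)) ∘ₗ rTensor H (rTensor H ρM) := by
  rw [← rTensor_comp, h1aux hf, rTensor_comp]

lemma counit_nat_comp (hM : counitLast k H M ∘ₗ ρM = LinearMap.id) :
    counitLast k H N ∘ₗ ρN ∘ₗ f = f := by
  rw [← hf, ← LinearMap.comp_assoc, counitLast_nat, LinearMap.comp_assoc, hM, LinearMap.comp_id]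

lemma pcmL2_nat : pcmL2 ρN ∘ₗ f = rTensor H (rTensor H f) ∘ₗ pcmL2 ρM := by
  have h2 : rTensor H (comulLast k H N) ∘ₗ rTensor H (rTensor H f)
      = rTensor H (rTensor H (rTensor H f)) ∘ₗ rTensor H (comulLast k H M) := by
    rw [← rTensor_comp, comulLast_nat, rTensor_comp]
  unfold pcmL2
  simp only [LinearMap.comp_assoc]
  rw [← hf]
  rw [← LinearMap.comp_assoc (ρM) (rTensor H f) (rTensor H ρN), h1aux hf]
  simp only [LinearMap.comp_assoc]
  rw [← LinearMap.comp_assoc (rTensor H ρM ∘ₗ ρM) (rTensor H (rTensor H f)) (rTensor H (comulLast k H N)), h2]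
  simp only [LinearMap.comp_assoc]
  rw [← LinearMap.comp_assoc (rTensor H (comulLast k H M) ∘ₗ rTensor H ρM ∘ₗ ρM) (rTensor H (rTensor H (rTensor H f))) (antLast k H ((N ⊗[k] H) ⊗[k] H)), antLast_nat]
  simp only [LinearMap.comp_assoc]
  rw [← LinearMap.comp_assoc (antLast k H ((M ⊗[k] H) ⊗[k] H) ∘ₗ rTensor H (comulLast k H M) ∘ₗ rTensor H ρM ∘ₗ ρM) (rTensor H (rTensor H (rTensor H f))) (mulLast k H (N ⊗[k] H)), mulLast_nat]
  simp only [LinearMap.comp_assoc]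

lemma pcmR2_nat : pcmR2 ρN ∘ₗ f = rTensor H (rTensor H f) ∘ₗ pcmR2 ρM := by
  unfold pcmR2
  simp only [LinearMap.comp_assoc]
  rw [← hf]
  rw [← LinearMap.comp_assoc (ρM) (rTensor H f) (rTensor H ρN), h1aux hf]
  simp only [LinearMap.comp_assoc]
  rw [← LinearMap.comp_assoc (rTensor H ρM ∘ₗ ρM) (rTensor H (rTensor H f)) (rTensor H (rTensor H ρN)), h2aux hf]
  simp only [LinearMap.comp_assoc]
  rw [← LinearMap.comp_assoc (rTensor H (rTensor H ρM) ∘ₗ rTensor H ρM ∘ₗ ρM) (rTensor H (rTensor H (rTensor H f))) (antLast k H ((N ⊗[k] H) ⊗[k] H)), antLast_nat]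
  simp only [LinearMap.comp_assoc]
  rw [← LinearMap.comp_assoc (antLast k H ((M ⊗[k] H) ⊗[k] H) ∘ₗ rTensor H (rTensor H ρM) ∘ₗ rTensor H ρM ∘ₗ ρM) (rTensor H (rTensor H (rTensor H f))) (mulLast k H (N ⊗[k] H)), mulLast_nat]
  simp only [LinearMap.comp_assoc]

lemma pcmL3_nat : pcmL3 ρN ∘ₗ f = rTensor H (rTensor H f) ∘ₗ pcmL3 ρM := by
  have h3a : rTensor H (antLast k H (N ⊗[k] H)) ∘ₗ rTensor H (rTensor H (rTensor H f))
      = rTensor H (rTensor H (rTensor H f)) ∘ₗ rTensor H (antLast k H (M ⊗[k] H)) := by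
    rw [← rTensor_comp, antLast_nat, rTensor_comp]
  have h3m : rTensor H (mulLast k H N) ∘ₗ rTensor H (rTensor H (rTensor H f))
      = rTensor H (rTensor H f) ∘ₗ rTensor H (mulLast k H M) := by
    rw [← rTensor_comp, mulLast_nat, rTensor_comp]
  unfold pcmL3
  simp only [LinearMap.comp_assoc]
  rw [← hf]
  rw [← LinearMap.comp_assoc (ρM) (rTensor H f) (rTensor H ρN), h1aux hf]
  simp only [LinearMap.comp_assoc]
  rw [← LinearMap.comp_assoc (rTensor H ρM ∘ₗ ρM) (rTensor H (rTensor H f)) (comulLast k H (N ⊗[k] H)), comulLast_nat]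
  simp only [LinearMap.comp_assoc]
  rw [← LinearMap.comp_assoc (comulLast k H (M ⊗[k] H) ∘ₗ rTensor H ρM ∘ₗ ρM) (rTensor H (rTensor H (rTensor H f))) (rTensor H (antLast k H (N ⊗[k] H))), h3a]
  simp only [LinearMap.comp_assoc]
  rw [← LinearMap.comp_assoc (rTensor H (antLast k H (M ⊗[k] H)) ∘ₗ comulLast k H (M ⊗[k] H) ∘ₗ rTensor H ρM ∘ₗ ρM) (rTensor H (rTensor H (rTensor H f))) (rTensor H (mulLast k H N)), h3m]
  simp only [LinearMap.comp_assoc]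

lemma pcmR3_nat : pcmR3 ρN ∘ₗ f = rTensor H (rTensor H f) ∘ₗ pcmR3 ρM := by
  have h3a : rTensor H (antLast k H (N ⊗[k] H)) ∘ₗ rTensor H (rTensor H (rTensor H f))
      = rTensor H (rTensor H (rTensor H f)) ∘ₗ rTensor H (antLast k H (M ⊗[k] H)) := by
    rw [← rTensor_comp, antLast_nat, rTensor_comp]
  have h3m : rTensor H (mulLast k H N) ∘ₗ rTensor H (rTensor H (rTensor H f))
      = rTensor H (rTensor H f) ∘ₗ rTensor H (mulLast k H M) := by
    rw [← rTensor_comp, mulLast_nat, rTensor_comp]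
  unfold pcmR3
  simp only [LinearMap.comp_assoc]
  rw [← hf]
  rw [← LinearMap.comp_assoc (ρM) (rTensor H f) (rTensor H ρN), h1aux hf]
  simp only [LinearMap.comp_assoc]
  rw [← LinearMap.comp_assoc (rTensor H ρM ∘ₗ ρM) (rTensor H (rTensor H f)) (rTensor H (rTensor H ρN)), h2aux hf]
  simp only [LinearMap.comp_assoc]
  rw [← LinearMap.comp_assoc (rTensor H (rTensor H ρM) ∘ₗ rTensor H ρM ∘ₗ ρM) (rTensor H (rTensor H (rTensor H f))) (rTensor H (antLast k H (N ⊗[k] H))), h3a]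
  simp only [LinearMap.comp_assoc]
  rw [← LinearMap.comp_assoc (rTensor H (antLast k H (M ⊗[k] H)) ∘ₗ rTensor H (rTensor H ρM) ∘ₗ rTensor H ρM ∘ₗ ρM) (rTensor H (rTensor H (rTensor H f))) (rTensor H (mulLast k H N)), h3m]
  simp only [LinearMap.comp_assoc]

end

end Aux2

section Aux3

open LinearMap Function

variable {k : Type u} [Field k] {H : Type u} [Ring H] [HopfAlgebra k H]
variable {M N P : Type u} [AddCommGroup M] [Module k M] [AddCommGroup N] [Module k N]
  [AddCommGroup P] [Module k P]

lemma rT_inj {f : M →ₗ[k] N} (hf : Injective f) : Injective (rTensor H f) :=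
  Module.Flat.rTensor_preserves_injective_linearMap (M := H) f hf

lemma ker_rTensor_eq (u : M →ₗ[k] N) :
    ker (rTensor H u) = range (rTensor H (ker u).subtype) :=
  (Module.Flat.rTensor_exact (M := H) (LinearMap.exact_subtype_ker_map u)).linearMap_ker_eq

lemma mem_range_rTensor_comap (f : M →ₗ[k] P) (Q : Submodule k P) {x : M ⊗[k] H}
    (hx : rTensor H f x ∈ range (rTensor H Q.subtype)) :
    x ∈ range (rTensor H (Q.comap f).subtype) := by
  have h0 : rTensor H (Q.mkQ ∘ₗ f) x = 0 := by
    obtain ⟨y, hy⟩ := hx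
    have : rTensor H Q.mkQ (rTensor H Q.subtype y) = 0 := by
      rw [← LinearMap.comp_apply, ← rTensor_comp]
      have hz : Q.mkQ ∘ₗ Q.subtype = 0 := by
        ext q; simp
      rw [hz, rTensor_zero, LinearMap.zero_apply]
    rw [rTensor_comp, LinearMap.comp_apply, ← hy, this]
  have hker : x ∈ ker (rTensor H (Q.mkQ ∘ₗ f)) := h0
  rw [ker_rTensor_eq] at hker
  have hk : ker (Q.mkQ ∘ₗ f) = Q.comap f := by
    rw [LinearMap.ker_comp, Submodule.ker_mkQ]
  rwa [hk] at hker

/-- The coaction on a partial subcomodule. -/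
noncomputable def subCoaction {ρ : M →ₗ[k] M ⊗[k] H} {N : Submodule k M}
    (hN : IsSubcomodule k H ρ N) : N →ₗ[k] N ⊗[k] H :=
  (LinearEquiv.ofInjective (rTensor H N.subtype)
      (rT_inj N.injective_subtype)).symm.toLinearMap ∘ₗ
    LinearMap.codRestrict (range (rTensor H N.subtype)) (ρ ∘ₗ N.subtype)
      (fun n => hN n.1 n.2)

lemma subCoaction_comm {ρ : M →ₗ[k] M ⊗[k] H} {N : Submodule k M}
    (hN : IsSubcomodule k H ρ N) :
    rTensor H N.subtype ∘ₗ subCoaction hN = ρ ∘ₗ N.subtype := by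
  ext n
  simp only [subCoaction, LinearMap.comp_apply, LinearEquiv.coe_coe]
  set e := LinearEquiv.ofInjective (rTensor H N.subtype) (rT_inj N.injective_subtype)
  set z := LinearMap.codRestrict (range (rTensor H N.subtype)) (ρ ∘ₗ N.subtype)
    (fun n => hN n.1 n.2) n
  have : rTensor H N.subtype (e.symm z) = (e (e.symm z) : M ⊗[k] H) := by
    rw [LinearEquiv.ofInjective_apply]
  rw [this, LinearEquiv.apply_symm_apply]
  rfl

/-- Transfer of the partial comodule axioms along an injective map commuting with coactions. -/
lemma isPartialComodule_of_injective_s7 {ρM : M →ₗ[k] M ⊗[k] H} {ρN : N →ₗ[k] N ⊗[k] H}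
    {f : M →ₗ[k] N} (hf : rTensor H f ∘ₗ ρM = ρN ∘ₗ f) (hinj : Injective f)
    (hN : IsPartialComodule k H ρN) : IsPartialComodule k H ρM := by
  have hinj2 : Injective (rTensor H (rTensor H f)) := rT_inj (rT_inj hinj)
  rw [isPartialComodule_iff] at hN ⊢
  refine ⟨?_, ?_, ?_⟩
  · have key : f ∘ₗ (counitLast k H M ∘ₗ ρM) = f := by
      rw [← LinearMap.comp_assoc, ← counitLast_nat, LinearMap.comp_assoc, hf,
        ← LinearMap.comp_assoc, hN.1, LinearMap.id_comp]
    apply LinearMap.ext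
    intro m
    exact hinj (LinearMap.congr_fun key m)
  · apply LinearMap.ext
    intro m
    have hL := LinearMap.congr_fun (pcmL2_nat hf) m
    have hR := LinearMap.congr_fun (pcmR2_nat hf) m
    simp only [LinearMap.comp_apply] at hL hR
    apply hinj2
    rw [← hL, ← hR, hN.2.1]
  · apply LinearMap.ext
    intro m
    have hL := LinearMap.congr_fun (pcmL3_nat hf) m
    have hR := LinearMap.congr_fun (pcmR3_nat hf) m
    simp only [LinearMap.comp_apply] at hL hR
    apply hinj2
    rw [← hL, ← hR, hN.2.2]

end Aux3

section Aux4

open LinearMap Function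

variable {k : Type u} [Field k] {H : Type u} [Ring H] [HopfAlgebra k H]

/-- A partial subcomodule is itself a partial comodule. -/
noncomputable def subObj (A : PComod k H) (N : Submodule k A.carrier)
    (hN : IsSubcomodule k H A.ρ N) : PComod k H where
  carrier := N
  ρ := subCoaction hN
  isPartialComodule :=
    isPartialComodule_of_injective_s7 (subCoaction_comm hN) N.injective_subtype
      A.isPartialComodule

/-- The inclusion of a partial subcomodule, as a morphism. -/
noncomputable def subIncl (A : PComod k H) (N : Submodule k A.carrier)
    (hN : IsSubcomodule k H A.ρ N) : subObj A N hN ⟶ A :=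
  ⟨N.subtype, subCoaction_comm hN⟩

/-- The kernel of a coaction-compatible map is a partial subcomodule. -/
lemma isSubcomodule_ker {A B : PComod k H} (u : A.carrier →ₗ[k] B.carrier)
    (hu : rTensor H u ∘ₗ A.ρ = B.ρ ∘ₗ u) : IsSubcomodule k H A.ρ (ker u) := by
  intro n hn
  have : rTensor H u (A.ρ n) = 0 := by
    have := LinearMap.congr_fun hu n
    simp only [LinearMap.comp_apply] at this
    rw [this, hn, map_zero]
  have hker : A.ρ n ∈ ker (rTensor H u) := this
  rwa [ker_rTensor_eq] at hker

/-- A preimage of a partial subcomodule under a coaction-compatible map is a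
partial subcomodule. -/
lemma isSubcomodule_comap {A B : PComod k H} (u : A.carrier →ₗ[k] B.carrier)
    (hu : rTensor H u ∘ₗ A.ρ = B.ρ ∘ₗ u) (Q : Submodule k B.carrier)
    (hQ : ∀ x ∈ Q, B.ρ x ∈ range (rTensor H Q.subtype)) :
    IsSubcomodule k H A.ρ (Q.comap u) := by
  intro n hn
  apply mem_range_rTensor_comap
  have : rTensor H u (A.ρ n) = B.ρ (u n) := by
    have := LinearMap.congr_fun hu n
    simpa only [LinearMap.comp_apply] using this
  rw [this]
  exact hQ _ hn

lemma pcomod_injective_of_mono {A B : PComod k H} (φ : A ⟶ B) [Mono φ] :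
    Injective φ.1 := by
  rw [← LinearMap.ker_eq_bot]
  set K := ker φ.1 with hK
  have hsub : IsSubcomodule k H A.ρ K := isSubcomodule_ker φ.1 φ.2
  have hzero : (0 : A.carrier →ₗ[k] A.carrier) = 0 := rfl
  let z : subObj A K hsub ⟶ A := ⟨0, by rw [rTensor_zero, LinearMap.zero_comp, LinearMap.comp_zero]⟩
  have hcomp : subIncl A K hsub ≫ φ = z ≫ φ := by
    apply Subtype.ext
    apply LinearMap.ext
    intro x
    have hx : φ.1 x.1 = 0 := x.2
    change φ.1 (K.subtype x) = φ.1 ((0 : ↥K →ₗ[k] A.carrier) x)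
    exact hx.trans (map_zero φ.1).symm
  have := (cancel_mono φ).mp hcomp
  have hsubz : K.subtype = (0 : K →ₗ[k] A.carrier) := congrArg Subtype.val this
  ext x
  constructor
  · intro hx
    have : (⟨x, hx⟩ : K).1 = 0 := by
      rw [show (⟨x, hx⟩ : K).1 = K.subtype ⟨x, hx⟩ from rfl, hsubz]
      rfl
    simpa using this
  · intro hx
    simp only [Submodule.mem_bot] at hx
    rw [hx]
    exact (ker φ.1).zero_mem

end Aux4

section Aux5

open LinearMap Function

variable {k : Type u} [Field k] {H : Type u} [Ring H] [HopfAlgebra k H]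
variable {J : Type u} [SmallCategory J] [IsFiltered J] (D : J ⥤ PComod k H)

/-- The underlying diagram of vector spaces. -/
noncomputable abbrev Fc := D ⋙ pforget k H

/-- The canonical map into the colimit of underlying vector spaces. -/
noncomputable def ιc (j : J) : (D.obj j).carrier →ₗ[k] ↑(colimit (Fc D)) :=
  (colimit.ι (Fc D) j).hom

lemma ιc_w {i j : J} (α : i ⟶ j) : ιc D j ∘ₗ (D.map α).1 = ιc D i :=
  by have := congrArg ModuleCat.Hom.hom (colimit.w (Fc D) α); exact this

/-- The cocone defining the coaction on the colimit. -/
noncomputable def coactionCocone : Cocone (Fc D) where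
  pt := ModuleCat.of k (↑(colimit (Fc D)) ⊗[k] H)
  ι :=
    { app := fun j => ModuleCat.ofHom (rTensor H (ιc D j) ∘ₗ (D.obj j).ρ : _ →ₗ[k] _)
      naturality := by
        intro i j α
        apply ModuleCat.hom_ext
        apply LinearMap.ext
        intro (x : (D.obj i).carrier)
        show (rTensor H (ιc D j) ∘ₗ (D.obj j).ρ) ((D.map α).1 x)
          = (rTensor H (ιc D i) ∘ₗ (D.obj i).ρ) x
        have h1 := LinearMap.congr_fun (D.map α).2 x
        simp only [LinearMap.comp_apply] at h1 ⊢
        rw [← h1, ← LinearMap.comp_apply (rTensor H _), ← rTensor_comp]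
        exact congrArg (fun g => rTensor H g ((D.obj i).ρ x)) (ιc_w D α) }

/-- The coaction on the colimit. -/
noncomputable def ρL : ↑(colimit (Fc D)) →ₗ[k] ↑(colimit (Fc D)) ⊗[k] H :=
  (colimit.desc (Fc D) (coactionCocone D)).hom

lemma ρL_ι (j : J) : ρL D ∘ₗ ιc D j = rTensor H (ιc D j) ∘ₗ (D.obj j).ρ :=
  by have := congrArg ModuleCat.Hom.hom (colimit.ι_desc (coactionCocone D) j); exact this

lemma colim_exists_rep (x : ↑(colimit (Fc D))) : ∃ (j : J) (y : (D.obj j).carrier),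
    ιc D j y = x :=
  by obtain ⟨j, y, hy⟩ := Concrete.colimit_exists_rep (Fc D) x; exact ⟨j, y, hy⟩

lemma colim_rep_eq {i i' : J} (x : (D.obj i).carrier) (y : (D.obj i').carrier)
    (h : ιc D i x = ιc D i' y) :
    ∃ (j : J) (α : i ⟶ j) (β : i' ⟶ j), (D.map α).1 x = (D.map β).1 y := by
  obtain ⟨j, α, β, hj⟩ := Concrete.colimit_exists_of_rep_eq (Fc D) (i := i) (j := i') x y h
  exact ⟨j, α, β, hj⟩

/-- The colimit, as a partial comodule. -/
noncomputable def Lobj : PComod k H where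
  carrier := ↑(colimit (Fc D))
  ρ := ρL D
  isPartialComodule := by
    rw [isPartialComodule_iff]
    refine ⟨?_, ?_, ?_⟩
    · apply LinearMap.ext
      intro x
      obtain ⟨j, y, rfl⟩ := colim_exists_rep D x
      have := LinearMap.congr_fun
        (counit_nat_comp (ρL_ι D j).symm (D.obj j).isPartialComodule.counit) y
      simpa only [LinearMap.comp_apply, LinearMap.id_apply] using this
    · apply LinearMap.ext
      intro x
      obtain ⟨j, y, rfl⟩ := colim_exists_rep D x
      have hL := LinearMap.congr_fun (pcmL2_nat (ρL_ι D j).symm) y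
      have hR := LinearMap.congr_fun (pcmR2_nat (ρL_ι D j).symm) y
      simp only [LinearMap.comp_apply] at hL hR
      have hstage : pcmL2 (D.obj j).ρ = pcmR2 (D.obj j).ρ :=
        (D.obj j).isPartialComodule.pcm2
      rw [show (pcmL2 (ρL D)) (ιc D j y) = _ from hL,
        show (pcmR2 (ρL D)) (ιc D j y) = _ from hR, hstage]
    · apply LinearMap.ext
      intro x
      obtain ⟨j, y, rfl⟩ := colim_exists_rep D x
      have hL := LinearMap.congr_fun (pcmL3_nat (ρL_ι D j).symm) y
      have hR := LinearMap.congr_fun (pcmR3_nat (ρL_ι D j).symm) y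
      simp only [LinearMap.comp_apply] at hL hR
      have hstage : pcmL3 (D.obj j).ρ = pcmR3 (D.obj j).ρ :=
        (D.obj j).isPartialComodule.pcm3
      rw [show (pcmL3 (ρL D)) (ιc D j y) = _ from hL,
        show (pcmR3 (ρL D)) (ιc D j y) = _ from hR, hstage]

/-- The colimit cocone in the category of partial comodules. -/
noncomputable def Lcocone : Cocone D where
  pt := Lobj D
  ι :=
    { app := fun j => ⟨ιc D j, (ρL_ι D j).symm⟩
      naturality := by
        intro i j α
        apply Subtype.ext
        show ιc D j ∘ₗ (D.map α).1 = ιc D i ∘ₗ LinearMap.id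
        rw [ιc_w D α, LinearMap.comp_id] }

/-- The cocone of underlying vector spaces of a cocone of partial comodules. -/
noncomputable def sCocone (s : Cocone D) : Cocone (Fc D) where
  pt := ModuleCat.of k s.pt.carrier
  ι :=
    { app := fun j => (ModuleCat.ofHom (s.ι.app j).1 : (Fc D).obj j ⟶ ModuleCat.of k s.pt.carrier)
      naturality := by
        intro i j α
        have := congrArg Subtype.val (s.ι.naturality α)
        apply ModuleCat.hom_ext
        apply LinearMap.ext
        intro x
        exact LinearMap.congr_fun this x }

/-- The descended linear map out of the colimit. -/
noncomputable def sdesc (s : Cocone D) : ↑(colimit (Fc D)) →ₗ[k] s.pt.carrier :=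
  (colimit.desc (Fc D) (sCocone D s)).hom

lemma sdesc_ι (s : Cocone D) (j : J) : sdesc D s ∘ₗ ιc D j = (s.ι.app j).1 :=
  by have := congrArg ModuleCat.Hom.hom (colimit.ι_desc (sCocone D s) j); exact this

lemma sdesc_comm (s : Cocone D) :
    rTensor H (sdesc D s) ∘ₗ ρL D = s.pt.ρ ∘ₗ sdesc D s := by
  apply LinearMap.ext
  intro x
  obtain ⟨j, y, rfl⟩ := colim_exists_rep D x
  have h1 : ρL D (ιc D j y) = rTensor H (ιc D j) ((D.obj j).ρ y) :=
    LinearMap.congr_fun (ρL_ι D j) y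
  have h2 : rTensor H (sdesc D s) (rTensor H (ιc D j) ((D.obj j).ρ y))
      = rTensor H ((s.ι.app j).1) ((D.obj j).ρ y) := by
    rw [← LinearMap.comp_apply, ← rTensor_comp, sdesc_ι]
  have h3 := LinearMap.congr_fun (s.ι.app j).2 y
  have h4 : sdesc D s (ιc D j y) = (s.ι.app j).1 y :=
    LinearMap.congr_fun (sdesc_ι D s j) y
  simp only [LinearMap.comp_apply] at h3 ⊢
  rw [h1, h2, h4]
  exact h3

/-- The colimit cocone is a colimit. -/
noncomputable def LcoconeIsColimit : IsColimit (Lcocone D) where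
  desc s := ⟨sdesc D s, sdesc_comm D s⟩
  fac s j := by
    apply Subtype.ext
    exact sdesc_ι D s j
  uniq s m hm := by
    apply Subtype.ext
    apply LinearMap.ext
    intro x
    obtain ⟨j, y, rfl⟩ := colim_exists_rep D x
    have h1 : m.1 (ιc D j y) = (s.ι.app j).1 y := by
      have := congrArg Subtype.val (hm j)
      exact LinearMap.congr_fun this y
    rw [h1]
    exact (LinearMap.congr_fun (sdesc_ι D s j) y).symm

end Aux5
/-- If `M` is a partial `H`-comodule admitting a finite subset `F` such that
the only partial subcomodule of `M` containing `F` is `M` itself, then `M` is a finitely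
generated object of the Grothendieck category `PMod^H`: for every filtered colimit
`N = colim Nᵢ` of monomorphisms, the canonical map `colim Hom(M, Nᵢ) → Hom(M, N)` is
bijective (expressed elementwise: every morphism to the colimit factors through some stage,
and two morphisms that agree in the colimit are already identified at some stage). -/
theorem pcomod_finitelyGenerated
    (k : Type u) [Field k] (H : Type u) [Ring H] [HopfAlgebra k H]
    (M : PComod k H) (F : Finset M.carrier)
    (hF : ∀ N : Submodule k M.carrier, IsSubcomodule k H M.ρ N →
      (↑F : Set M.carrier) ⊆ ↑N → N = ⊤)
    (J : Type u) [SmallCategory J] [IsFiltered J]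
    (D : J ⥤ PComod k H) (hmono : ∀ {i j : J} (α : i ⟶ j), Mono (D.map α))
    (c : Cocone D) (hc : IsColimit c) :
    (∀ f : M ⟶ c.pt, ∃ (j : J) (g : M ⟶ D.obj j), g ≫ c.ι.app j = f) ∧
    (∀ (i i' : J) (g : M ⟶ D.obj i) (g' : M ⟶ D.obj i'),
      g ≫ c.ι.app i = g' ≫ c.ι.app i' →
      ∃ (j : J) (α : i ⟶ j) (β : i' ⟶ j), g ≫ D.map α = g' ≫ D.map β) := by
  classical
  open LinearMap Function in
  -- comparison between the given colimit cocone and the concrete one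
  have hLc := LcoconeIsColimit D
  set φ : Lobj D ⟶ c.pt := hLc.desc c with hφ
  set ψ : c.pt ⟶ Lobj D := hc.desc (Lcocone D) with hψ
  have hφι : ∀ j, φ.1 ∘ₗ ιc D j = (c.ι.app j).1 := fun j =>
    congrArg Subtype.val (hLc.fac c j)
  have hψι : ∀ j, ψ.1 ∘ₗ (c.ι.app j).1 = ιc D j := fun j =>
    congrArg Subtype.val (hc.fac (Lcocone D) j)
  have hφψ : ∀ x, φ.1 (ψ.1 x) = x := by
    have hcomp : ψ ≫ φ = 𝟙 c.pt := by
      apply hc.hom_ext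
      intro j
      rw [← Category.assoc, show c.ι.app j ≫ ψ = (Lcocone D).ι.app j from hc.fac (Lcocone D) j]
      exact (hLc.fac c j).trans (Category.comp_id _).symm
    intro x
    exact LinearMap.congr_fun (congrArg Subtype.val hcomp) x
  -- elementwise description of the colimit
  have repc : ∀ x : c.pt.carrier, ∃ (j : J) (y : (D.obj j).carrier),
      (c.ι.app j).1 y = x := by
    intro x
    obtain ⟨j, y, hy⟩ := colim_exists_rep D (ψ.1 x)
    refine ⟨j, y, ?_⟩
    have h1 : φ.1 (ιc D j y) = (c.ι.app j).1 y := LinearMap.congr_fun (hφι j) y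
    rw [← h1, hy, hφψ]
  have eqc : ∀ {i i' : J} (x : (D.obj i).carrier) (y : (D.obj i').carrier),
      (c.ι.app i).1 x = (c.ι.app i').1 y →
      ∃ (j : J) (α : i ⟶ j) (β : i' ⟶ j), (D.map α).1 x = (D.map β).1 y := by
    intro i i' x y hxy
    apply colim_rep_eq D
    have h1 : ψ.1 ((c.ι.app i).1 x) = ιc D i x := LinearMap.congr_fun (hψι i) x
    have h2 : ψ.1 ((c.ι.app i').1 y) = ιc D i' y := LinearMap.congr_fun (hψι i') y
    rw [← h1, ← h2, hxy]
  -- the maps to the colimit are injective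
  have mapcomp : ∀ {a b e : J} (p : a ⟶ b) (q : b ⟶ e) (x : (D.obj a).carrier),
      (D.map (p ≫ q)).1 x = (D.map q).1 ((D.map p).1 x) := by
    intro a b e p q x
    rw [D.map_comp]
    rfl
  have inj_ι : ∀ j, Injective (c.ι.app j).1 := by
    intro j x x' hxx
    obtain ⟨l, α, β, hl⟩ := eqc x x' hxx
    have hco := IsFiltered.coeq_condition α β
    have heq : (D.map (α ≫ IsFiltered.coeqHom α β)).1 x
        = (D.map (α ≫ IsFiltered.coeqHom α β)).1 x' := by
      rw [mapcomp, hl, hco, mapcomp]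
    haveI := hmono (α ≫ IsFiltered.coeqHom α β)
    exact pcomod_injective_of_mono (D.map (α ≫ IsFiltered.coeqHom α β)) heq
  constructor
  · -- every morphism factors through a stage
    intro f
    have key : ∀ S : Finset M.carrier, ∃ j : J, ∀ m ∈ S,
        f.1 m ∈ LinearMap.range (c.ι.app j).1 := by
      intro S
      induction S using Finset.induction_on with
      | empty =>
        obtain ⟨j⟩ := IsFiltered.nonempty (C := J)
        exact ⟨j, by simp⟩
      | @insert a s ha ih =>
        obtain ⟨j₁, h₁⟩ := ih
        obtain ⟨j₂, y₂, hy₂⟩ := repc (f.1 a)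
        refine ⟨IsFiltered.max j₁ j₂, ?_⟩
        intro m hm
        rcases Finset.mem_insert.mp hm with h | h
        · subst h
          refine ⟨(D.map (IsFiltered.rightToMax j₁ j₂)).1 y₂, ?_⟩
          have := congrArg Subtype.val (c.w (IsFiltered.rightToMax j₁ j₂))
          rw [← hy₂, ← this]
          rfl
        · obtain ⟨y, hy⟩ := h₁ m h
          refine ⟨(D.map (IsFiltered.leftToMax j₁ j₂)).1 y, ?_⟩
          have := congrArg Subtype.val (c.w (IsFiltered.leftToMax j₁ j₂))
          rw [← hy, ← this]
          rfl
    obtain ⟨j, hj⟩ := key F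
    have hQ : ∀ x ∈ LinearMap.range (c.ι.app j).1, c.pt.ρ x ∈ LinearMap.range (rTensor H (LinearMap.range (c.ι.app j).1).subtype) := by
      rintro x ⟨y, rfl⟩
      have h1 : c.pt.ρ ((c.ι.app j).1 y) = rTensor H (c.ι.app j).1 ((D.obj j).ρ y) := by
        have := LinearMap.congr_fun (c.ι.app j).2 y
        exact this.symm
      refine ⟨rTensor H (LinearMap.codRestrict (LinearMap.range (c.ι.app j).1) (c.ι.app j).1
        (fun z => LinearMap.mem_range_self _ z)) ((D.obj j).ρ y), ?_⟩
      rw [← LinearMap.comp_apply, ← rTensor_comp, LinearMap.subtype_comp_codRestrict]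
      exact h1.symm
    have hsub : IsSubcomodule k H M.ρ ((LinearMap.range (c.ι.app j).1).comap f.1) :=
      isSubcomodule_comap f.1 f.2 _ hQ
    have htop : (LinearMap.range (c.ι.app j).1).comap f.1 = ⊤ := by
      apply hF _ hsub
      intro m hm
      exact hj m hm
    have hall : ∀ m, f.1 m ∈ LinearMap.range (c.ι.app j).1 := by
      intro m
      have : m ∈ (LinearMap.range (c.ι.app j).1).comap f.1 := htop ▸ Submodule.mem_top
      exact this
    set e := LinearEquiv.ofInjective (c.ι.app j).1 (inj_ι j) with he
    set g0 : M.carrier →ₗ[k] (D.obj j).carrier :=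
      e.symm.toLinearMap ∘ₗ
        LinearMap.codRestrict (LinearMap.range (c.ι.app j).1) f.1 hall with hg0def
    have hg0 : ∀ m, (c.ι.app j).1 (g0 m) = f.1 m := by
      intro m
      have hz : g0 m
          = e.symm (LinearMap.codRestrict (LinearMap.range (c.ι.app j).1) f.1 hall m) := rfl
      rw [hz]
      have h7 : (c.ι.app j).1
            (e.symm (LinearMap.codRestrict (LinearMap.range (c.ι.app j).1) f.1 hall m))
          = (e (e.symm (LinearMap.codRestrict (LinearMap.range (c.ι.app j).1) f.1 hall m))).1 :=
        rfl
      rw [h7, LinearEquiv.apply_symm_apply]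
      rfl
    have hg0c : (c.ι.app j).1 ∘ₗ g0 = f.1 := LinearMap.ext hg0
    have gmorph : rTensor H g0 ∘ₗ M.ρ = (D.obj j).ρ ∘ₗ g0 := by
      apply LinearMap.ext
      intro m
      apply rT_inj (inj_ι j)
      have h1 : rTensor H (c.ι.app j).1 (rTensor H g0 (M.ρ m))
          = rTensor H f.1 (M.ρ m) := by
        rw [← LinearMap.comp_apply, ← rTensor_comp, hg0c]
      have h2 : rTensor H f.1 (M.ρ m) = c.pt.ρ (f.1 m) := by
        have := LinearMap.congr_fun f.2 m
        simpa only [LinearMap.comp_apply] using this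
      have h3 : c.pt.ρ ((c.ι.app j).1 (g0 m))
          = rTensor H (c.ι.app j).1 ((D.obj j).ρ (g0 m)) := by
        have := LinearMap.congr_fun (c.ι.app j).2 (g0 m)
        exact this.symm
      simp only [LinearMap.comp_apply]
      rw [h1, h2, ← hg0 m, h3]
    refine ⟨j, ⟨g0, gmorph⟩, ?_⟩
    apply Subtype.ext
    exact hg0c
  · -- two morphisms equalized in the colimit are equalized at a stage
    intro i i' g g' hgg
    have hptwise : ∀ m : M.carrier, (c.ι.app i).1 (g.1 m) = (c.ι.app i').1 (g'.1 m) := by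
      intro m
      exact LinearMap.congr_fun (congrArg Subtype.val hgg) m
    have key : ∀ S : Finset M.carrier, ∃ (j : J) (α : i ⟶ j) (β : i' ⟶ j),
        ∀ m ∈ S, (D.map α).1 (g.1 m) = (D.map β).1 (g'.1 m) := by
      intro S
      induction S using Finset.induction_on with
      | empty =>
        exact ⟨IsFiltered.max i i', IsFiltered.leftToMax i i', IsFiltered.rightToMax i i',
          by simp⟩
      | @insert a s ha ih =>
        obtain ⟨j₁, α₁, β₁, h₁⟩ := ih
        obtain ⟨j₂, α₂, β₂, h₂⟩ := eqc (g.1 a) (g'.1 a) (hptwise a)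
        set u := IsFiltered.leftToMax j₁ j₂
        set v := IsFiltered.rightToMax j₁ j₂
        set w := IsFiltered.coeqHom (α₁ ≫ u) (α₂ ≫ v)
        set w' := IsFiltered.coeqHom (β₁ ≫ u ≫ w) (β₂ ≫ v ≫ w)
        refine ⟨_, α₁ ≫ u ≫ w ≫ w', β₁ ≫ u ≫ w ≫ w', ?_⟩
        have hαeq : α₁ ≫ u ≫ w ≫ w' = α₂ ≫ v ≫ w ≫ w' := by
          have := IsFiltered.coeq_condition (α₁ ≫ u) (α₂ ≫ v)
          have := congrArg (fun t => t ≫ w') this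
          simpa only [Category.assoc] using this
        have hβeq : β₁ ≫ u ≫ w ≫ w' = β₂ ≫ v ≫ w ≫ w' := by
          have := IsFiltered.coeq_condition (β₁ ≫ u ≫ w) (β₂ ≫ v ≫ w)
          simpa only [Category.assoc] using this
        intro m hm
        rcases Finset.mem_insert.mp hm with h | h
        · subst h
          rw [hαeq, mapcomp α₂ (v ≫ w ≫ w'), h₂, ← mapcomp β₂ (v ≫ w ≫ w'), ← hβeq]
        · rw [mapcomp α₁ (u ≫ w ≫ w'), h₁ m h, ← mapcomp β₁ (u ≫ w ≫ w')]
    obtain ⟨j, α, β, hj⟩ := key F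
    set uu : M.carrier →ₗ[k] (D.obj j).carrier :=
      (D.map α).1 ∘ₗ g.1 - (D.map β).1 ∘ₗ g'.1 with huu
    have hp : rTensor H ((D.map α).1 ∘ₗ g.1) ∘ₗ M.ρ
        = (D.obj j).ρ ∘ₗ ((D.map α).1 ∘ₗ g.1) := by
      rw [rTensor_comp, LinearMap.comp_assoc, g.2, ← LinearMap.comp_assoc, (D.map α).2,
        LinearMap.comp_assoc]
    have hq : rTensor H ((D.map β).1 ∘ₗ g'.1) ∘ₗ M.ρ
        = (D.obj j).ρ ∘ₗ ((D.map β).1 ∘ₗ g'.1) := by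
      rw [rTensor_comp, LinearMap.comp_assoc, g'.2, ← LinearMap.comp_assoc, (D.map β).2,
        LinearMap.comp_assoc]
    have hu : rTensor H uu ∘ₗ M.ρ = (D.obj j).ρ ∘ₗ uu := by
      rw [huu, rTensor_sub, LinearMap.sub_comp, hp, hq, ← LinearMap.comp_sub]
    have hsub : IsSubcomodule k H M.ρ (ker uu) := isSubcomodule_ker uu hu
    have htop : ker uu = ⊤ := by
      apply hF _ hsub
      intro m hm
      have : uu m = 0 := by
        rw [huu]
        simp only [LinearMap.sub_apply, LinearMap.comp_apply]
        rw [hj m hm, sub_self]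
      exact this
    have huu0 : (D.map α).1 ∘ₗ g.1 = (D.map β).1 ∘ₗ g'.1 := by
      apply LinearMap.ext
      intro m
      have : uu m = 0 := by
        have : m ∈ ker uu := htop ▸ Submodule.mem_top
        exact this
      have := sub_eq_zero.mp (by simpa [huu] using this)
      simpa using this
    exact ⟨j, α, β, Subtype.ext huu0⟩

end
end

section
/- Let k be a field and G a finite group. Then the dual Hopf algebra (kG)* of the group algebra kG is regular: every partial (kG)*-comodule is the sum of its finite-dimensional partial subcomodules. -/
open TensorProduct CategoryTheory CategoryTheory.Limits

noncomputable section

universe u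

section Regular

variable (k : Type u) [Field k] (H : Type u) [Ring H] [HopfAlgebra k H]

/-- A partial comodule is regular when it is the sum of its finite-dimensional partial
subcomodules. -/
def IsRegularComodule {M : Type u} [AddCommGroup M] [Module k M]
    (ρ : M →ₗ[k] M ⊗[k] H) : Prop :=
  sSup { N : Submodule k M | IsSubcomodule k H ρ N ∧ FiniteDimensional k ↥N } = ⊤

/-- A Hopf algebra is regular when every partial comodule over it is regular. -/
def IsRegularHopf : Prop :=
  ∀ (M : Type u) (_ : AddCommGroup M) (_ : Module k M) (ρ : M →ₗ[k] M ⊗[k] H),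
    IsPartialComodule k H ρ → IsRegularComodule k H ρ

end Regular
section DualPairing

variable (k : Type u) [Field k] (H : Type u) [Ring H] [HopfAlgebra k H]
variable (H' : Type u) [Ring H'] [HopfAlgebra k H']

/-- `φ` exhibits the Hopf algebra `H'` as the dual Hopf algebra of `H`: the multiplication,
unit, comultiplication, counit and antipode of `H'` are dual to the comultiplication, counit,
multiplication, unit and antipode of `H`. -/
structure IsDualHopf (φ : H' ≃ₗ[k] Module.Dual k H) : Prop where
  mul_dual : ∀ (a b : H') (h : H),
    φ (a * b) h =
      TensorProduct.lid k k (TensorProduct.map (φ a) (φ b) (Coalgebra.comul (R := k) h))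
  one_dual : φ 1 = Coalgebra.counit (R := k)
  comul_dual : ∀ (a : H') (x y : H),
    TensorProduct.dualDistrib k H H
      (TensorProduct.map φ.toLinearMap φ.toLinearMap (Coalgebra.comul (R := k) a))
      (x ⊗ₜ[k] y) = φ a (x * y)
  counit_dual : ∀ a : H', Coalgebra.counit (R := k) a = φ a 1
  antipode_dual : ∀ (a : H') (h : H),
    φ (HopfAlgebra.antipode (R := k) a) h = φ a (HopfAlgebra.antipode (R := k) h)

end DualPairing

section GroupAlgebra

variable (k : Type u) [Field k] (K : Type u) [Ring K] [HopfAlgebra k K]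
variable (G : Type u) [Group G]

/-- `e : G → K` exhibits the Hopf algebra `K` as the group Hopf algebra `kG` of the group
`G`: the elements `e g` form a basis of `K`, multiply as in `G`, are grouplike, and the
antipode is induced by inversion in `G`. -/
structure IsGroupHopfAlgebra (e : G → K) : Prop where
  basis : ∃ b : Module.Basis G k K, ∀ g : G, b g = e g
  map_mul : ∀ g h : G, e g * e h = e (g * h)
  map_one : e 1 = 1
  comul_grouplike : ∀ g : G, Coalgebra.comul (R := k) (e g) = e g ⊗ₜ[k] e g
  counit_grouplike : ∀ g : G, Coalgebra.counit (R := k) (e g) = 1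
  antipode_inv : ∀ g : G, HopfAlgebra.antipode (R := k) (e g) = e g⁻¹

end GroupAlgebra


section RegularityProof

set_option linter.unusedSectionVars false
set_option linter.unnecessarySimpa false
set_option maxHeartbeats 1000000

section AuxBasis

variable {k : Type u} [Field k] {G : Type u} [Group G] [Fintype G] [DecidableEq G]
variable {H' : Type u} [Ring H'] [HopfAlgebra k H']

structure GroupLikeDualBasis (q : Module.Basis G k H') : Prop where
  mul : ∀ a c : G, q a * q c = if a = c then q a else 0
  comul : ∀ g : G, Coalgebra.comul (R := k) (q g) = ∑ a : G, q a ⊗ₜ[k] q (a⁻¹ * g)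
  counit : ∀ g : G, Coalgebra.counit (R := k) (q g) = if g = 1 then (1:k) else 0
  antipode : ∀ g : G, HopfAlgebra.antipode (R := k) (q g) = q g⁻¹

def cp (q : Module.Basis G k H') (X : Type u) [AddCommGroup X] [Module k X] (g : G) :
    (X ⊗[k] H') →ₗ[k] X :=
  (TensorProduct.rid k X).toLinearMap ∘ₗ LinearMap.lTensor X (q.coord g)

section basiclemmas
variable (q : Module.Basis G k H') {X : Type u} [AddCommGroup X] [Module k X]

lemma cp_tmul (g : G) (x : X) (h : H') : cp q X g (x ⊗ₜ[k] h) = q.repr h g • x := by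
  simp [cp, Module.Basis.coord_apply, TensorProduct.smul_tmul']

lemma cp_tmul_basis (g a : G) (x : X) :
    cp q X g (x ⊗ₜ[k] q a) = if a = g then x else 0 := by
  rw [cp_tmul, Module.Basis.repr_self, Finsupp.single_apply]
  split <;> simp

lemma cp_expand (w : X ⊗[k] H') : w = ∑ g : G, cp q X g w ⊗ₜ[k] q g := by
  induction w using TensorProduct.induction_on with
  | zero => simp
  | tmul x h =>
    simp only [cp_tmul]
    have : ∑ g : G, (q.repr h g • x) ⊗ₜ[k] q g = x ⊗ₜ[k] (∑ g : G, q.repr h g • q g) := by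
      rw [TensorProduct.tmul_sum]
      exact Finset.sum_congr rfl fun g _ => by
        rw [TensorProduct.tmul_smul, TensorProduct.smul_tmul']
    rw [this, Module.Basis.sum_repr]
  | add u v hu hv =>
    simp only [map_add, TensorProduct.add_tmul]
    rw [Finset.sum_add_distrib, ← hu, ← hv]

variable {q} (hq : GroupLikeDualBasis q)
include hq

lemma mulLast_tmul (x : X) (a c : G) :
    mulLast k H' X ((x ⊗ₜ[k] q a) ⊗ₜ[k] q c) = if a = c then x ⊗ₜ[k] q a else 0 := by
  simp only [mulLast, LinearMap.coe_comp, Function.comp_apply, LinearEquiv.coe_coe,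
    TensorProduct.assoc_tmul, LinearMap.lTensor_tmul, LinearMap.mul'_apply, hq.mul]
  split <;> simp

lemma comulLast_tmul (x : X) (g : G) :
    comulLast k H' X (x ⊗ₜ[k] q g) = ∑ a : G, (x ⊗ₜ[k] q a) ⊗ₜ[k] q (a⁻¹ * g) := by
  simp only [comulLast, LinearMap.coe_comp, Function.comp_apply, LinearMap.lTensor_tmul,
    hq.comul, LinearEquiv.coe_coe, TensorProduct.tmul_sum, map_sum,
    TensorProduct.assoc_symm_tmul]

lemma antLast_tmul (x : X) (g : G) :
    antLast k H' X (x ⊗ₜ[k] q g) = x ⊗ₜ[k] q g⁻¹ := by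
  simp [antLast, hq.antipode]

lemma counitLast_tmul (x : X) (g : G) :
    counitLast k H' X (x ⊗ₜ[k] q g) = if g = 1 then x else 0 := by
  simp only [counitLast, LinearMap.coe_comp, Function.comp_apply, LinearMap.lTensor_tmul,
    hq.counit, LinearEquiv.coe_coe]
  split <;> simp

omit hq

lemma coeff_ext {f f' : G → G → X}
    (h : ∑ g : G, ∑ a : G, (f a g ⊗ₜ[k] q a) ⊗ₜ[k] q g
       = ∑ g : G, ∑ a : G, (f' a g ⊗ₜ[k] q a) ⊗ₜ[k] q g) (a g : G) : f a g = f' a g := by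
  have := congrArg (cp q X a ∘ cp q (X ⊗[k] H') g) h
  simpa [map_sum, cp_tmul_basis, Finset.sum_ite_eq', apply_ite] using this

end basiclemmas

variable {M : Type u} [AddCommGroup M] [Module k M] {ρ : M →ₗ[k] M ⊗[k] H'}
variable {q : Module.Basis G k H'} (hq : GroupLikeDualBasis q)

def Tg (q : Module.Basis G k H') (ρ : M →ₗ[k] M ⊗[k] H') (g : G) : Module.End k M :=
  cp q M g ∘ₗ ρ

lemma rho_expand (m : M) : ρ m = ∑ g : G, Tg q ρ g m ⊗ₜ[k] q g := by
  simpa [Tg] using cp_expand q (ρ m)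

lemma rho_expand_inv (m : M) : ρ m = ∑ g : G, Tg q ρ g⁻¹ m ⊗ₜ[k] q g⁻¹ := by
  rw [rho_expand (q := q)]
  exact (Fintype.sum_equiv (Equiv.inv G) _ _ (fun g => by simp)).symm

lemma sum_comm_outer (f : G → G → G → M) :
    ∑ x : G, ∑ y : G, ∑ z : G, f x y z = ∑ y : G, ∑ x : G, ∑ z : G, f x y z :=
  Finset.sum_comm

lemma sum_comm_inner (f : G → G → G → M) :
    ∑ x : G, ∑ y : G, ∑ z : G, f x y z = ∑ x : G, ∑ z : G, ∑ y : G, f x y z :=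
  Finset.sum_congr rfl fun _ _ => Finset.sum_comm

variable (hρ : IsPartialComodule k H' ρ)
include hq hρ

lemma Tg_one : Tg q ρ 1 = LinearMap.id := by
  ext m
  have h := LinearMap.congr_fun hρ.counit m
  rw [LinearMap.comp_apply, rho_expand (q := q)] at h
  simpa [map_sum, counitLast_tmul hq, Finset.sum_ite_eq'] using h

lemma TgR2 (a g : G) (m : M) :
    Tg q ρ (a*g) (Tg q ρ g⁻¹ m) = Tg q ρ a (Tg q ρ g (Tg q ρ g⁻¹ m)) := by
  have h := LinearMap.congr_fun hρ.pcm2 m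
  simp only [LinearMap.comp_apply] at h
  rw [rho_expand_inv (q := q) m] at h
  simp only [map_sum, LinearMap.rTensor_tmul, rho_expand (q := q) (ρ := ρ), TensorProduct.sum_tmul,
    map_sum, comulLast_tmul hq, antLast_tmul hq, mulLast_tmul hq, inv_inv] at h
  have h2 := congrArg (cp q M a ∘ cp q (M ⊗[k] H') g) h
  simp only [Function.comp_apply, map_sum, apply_ite, map_zero, cp_tmul_basis,
    inv_mul_eq_iff_eq_mul, Finset.sum_ite_eq, Finset.sum_ite_eq', Finset.mem_univ, if_true] at h2
  rw [sum_comm_inner] at h2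
  simp only [Finset.sum_ite_eq', Finset.mem_univ, if_true, mul_right_inj,
    Finset.sum_ite_irrel, Finset.sum_const_zero, Finset.sum_ite_eq] at h2
  simpa using h2

lemma TgR3 (c d : G) (m : M) :
    Tg q ρ c (Tg q ρ (c⁻¹*d) m) = Tg q ρ c (Tg q ρ c⁻¹ (Tg q ρ d m)) := by
  have h := LinearMap.congr_fun hρ.pcm3 m
  simp only [LinearMap.comp_apply] at h
  rw [rho_expand (q := q) m] at h
  simp only [map_sum, LinearMap.rTensor_tmul, rho_expand (q := q) (ρ := ρ),
    TensorProduct.sum_tmul, map_sum, comulLast_tmul hq, antLast_tmul hq, mulLast_tmul hq,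
    inv_inv] at h
  have h2 := congrArg (cp q M c ∘ cp q (M ⊗[k] H') d) h
  simp only [Function.comp_apply, map_sum, apply_ite, map_zero, cp_tmul_basis,
    TensorProduct.zero_tmul, inv_mul_eq_iff_eq_mul, Finset.sum_ite_eq, Finset.sum_ite_eq',
    Finset.mem_univ, if_true] at h2
  conv at h2 => lhs; rw [sum_comm_outer, sum_comm_inner]
  simp only [Finset.sum_ite_eq', Finset.sum_ite_eq, Finset.mem_univ, if_true,
    Finset.sum_ite_irrel, Finset.sum_const_zero, inv_eq_iff_eq_inv, inv_inv] at h2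
  conv at h2 => lhs; rw [Finset.sum_comm]
  simp only [Finset.sum_ite_eq', Finset.mem_univ, if_true, inv_eq_iff_eq_inv, inv_inv,
    Finset.sum_ite_eq] at h2
  simpa using h2

local notation "T" => Tg q ρ

lemma Tg_one' : T 1 = (1 : Module.End k M) := Tg_one hq hρ

lemma R2 (a g : G) : T (a*g) * T g⁻¹ = T a * T g * T g⁻¹ :=
  LinearMap.ext fun m => TgR2 hq hρ a g m

lemma R3 (c d : G) : T c * T (c⁻¹*d) = T c * T c⁻¹ * T d :=
  LinearMap.ext fun m => TgR3 hq hρ c d m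

lemma Treg (g : G) : T g * T g⁻¹ * T g = T g := by
  have := (R3 hq hρ g g).symm
  simpa [Tg_one' hq hρ] using this

lemma TTmul (c d : G) : T c * T d = T c * T c⁻¹ * T (c*d) := by
  have := R3 hq hρ c (c*d)
  simpa using this

lemma TTmul' (c d : G) : T c * T d = T (c*d) * T d⁻¹ * T d := by
  have := R2 hq hρ (c*d) d⁻¹
  simpa using this

def Eg (q : Module.Basis G k H') (ρ : M →ₗ[k] M ⊗[k] H') (g : G) : Module.End k M :=
  Tg q ρ g * Tg q ρ g⁻¹

local notation "E" => Eg q ρ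

lemma Eg_idem (g : G) : E g * E g = E g := by
  show T g * T g⁻¹ * (T g * T g⁻¹) = T g * T g⁻¹
  rw [← mul_assoc, mul_assoc (T g), ← mul_assoc, Treg hq hρ]

lemma Treg' (g : G) : T g⁻¹ * T g * T g⁻¹ = T g⁻¹ := by
  simpa using Treg hq hρ g⁻¹

lemma T_mul_E (c x : G) : T c * E x = T (c*x) * T x⁻¹ := by
  show T c * (T x * T x⁻¹) = _
  rw [← mul_assoc, TTmul' hq hρ c x, mul_assoc, mul_assoc, ← mul_assoc (T x⁻¹),
    Treg' hq hρ]

lemma E_mul_T (c x : G) : E (c*x) * T c = T (c*x) * T x⁻¹ := by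
  show T (c*x) * T (c*x)⁻¹ * T c = _
  rw [mul_assoc, TTmul hq hρ (c*x)⁻¹ c]
  have h1 : (c*x)⁻¹⁻¹ = c*x := inv_inv _
  have h2 : (c*x)⁻¹ * c = x⁻¹ := by group
  rw [h1, h2, ← mul_assoc, ← mul_assoc, Treg hq hρ]

lemma T_E_swap (c x : G) : T c * E x = E (c*x) * T c := by
  rw [T_mul_E hq hρ, E_mul_T hq hρ]

lemma E_comm (a b : G) : E a * E b = E b * E a := by
  have h1 : E a * E b = T a * (E (a⁻¹*b) * T a⁻¹) := by
    show T a * T a⁻¹ * E b = _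
    rw [mul_assoc, T_E_swap hq hρ a⁻¹ b]
  have h2 : T a * E (a⁻¹*b) = E b * T a := by
    have := T_E_swap hq hρ a (a⁻¹*b)
    simpa using this
  rw [h1, ← mul_assoc, h2, mul_assoc]
  rfl

def prodE (hq : GroupLikeDualBasis q) (hρ : IsPartialComodule k H' ρ) (S : Finset G) :
    Module.End k M :=
  S.noncommProd (Eg q ρ) (fun a _ b _ _ => E_comm hq hρ a b)

local notation "P" => prodE hq hρ

lemma prodE_empty : P ∅ = 1 := Finset.noncommProd_empty _ _

lemma prodE_insert_of_not_mem {S : Finset G} {c : G} (hc : c ∉ S) :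
    P (insert c S) = E c * P S :=
  Finset.noncommProd_insert_of_notMem _ _ _ _ hc

lemma E_commute_prodE (c : G) (S : Finset G) : Commute (E c) (P S) := by
  apply Finset.noncommProd_induction
  · exact fun a b ha hb => ha.mul_right hb
  · exact Commute.one_right _
  · exact fun x _ => E_comm hq hρ c x

lemma E_mul_prodE_of_mem {S : Finset G} {c : G} (hc : c ∈ S) : E c * P S = P S := by
  induction S using Finset.induction_on with
  | empty => simp at hc
  | @insert a S' ha ih =>
    rw [prodE_insert_of_not_mem hq hρ ha]
    rcases Finset.mem_insert.mp hc with rfl | hc'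
    · rw [← mul_assoc, Eg_idem hq hρ]
    · rw [← mul_assoc, ← E_comm hq hρ, mul_assoc, ih hc']

lemma prodE_insert (c : G) (S : Finset G) : P (insert c S) = E c * P S := by
  by_cases hc : c ∈ S
  · rw [Finset.insert_eq_self.mpr hc, E_mul_prodE_of_mem hq hρ hc]
  · exact prodE_insert_of_not_mem hq hρ hc

lemma prodE_mul_E (c : G) (S : Finset G) : P S * E c = P (insert c S) := by
  rw [prodE_insert hq hρ, (E_commute_prodE hq hρ c S).eq]

lemma T_mul_prodE (c : G) (S : Finset G) :
    T c * P S = P (S.image (c * ·)) * T c := by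
  induction S using Finset.induction_on with
  | empty => simp [prodE_empty hq hρ]
  | @insert a S' ha ih =>
    rw [prodE_insert_of_not_mem hq hρ ha, ← mul_assoc, T_E_swap hq hρ c a, mul_assoc, ih,
      Finset.image_insert, prodE_insert hq hρ, ← mul_assoc]

lemma gen_closed (c : G) (S : Finset G) (g : G) :
    ∃ S' g', T c * (P S * T g) = P S' * T g' := by
  refine ⟨insert c (S.image (c * ·)), c * g, ?_⟩
  rw [← mul_assoc, T_mul_prodE hq hρ, mul_assoc, TTmul hq hρ c g, ← mul_assoc,
    ← mul_assoc]
  show P (S.image (c * ·)) * E c * T (c*g) = _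
  rw [prodE_mul_E hq hρ]

lemma regular_main : IsRegularComodule k H' ρ := by
  rw [IsRegularComodule, eq_top_iff]
  intro m _
  set Gen : Set (Module.End k M) := Set.range (fun p : Finset G × G => P p.1 * T p.2) with hGen
  set A : Submodule k (Module.End k M) := Submodule.span k Gen with hA
  have hclosure : ∀ (c : G) (f : Module.End k M), f ∈ A → T c * f ∈ A := by
    intro c f hf
    induction hf using Submodule.span_induction with
    | mem f hf =>
      obtain ⟨⟨S, g⟩, rfl⟩ := hf
      obtain ⟨S', g', h⟩ := gen_closed hq hρ c S g
      exact Submodule.subset_span ⟨⟨S', g'⟩, h.symm⟩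
    | zero => simpa using Submodule.zero_mem A
    | add f f' _ _ hf hf' => rw [mul_add]; exact Submodule.add_mem A hf hf'
    | smul a f _ hf => rw [mul_smul_comm]; exact Submodule.smul_mem A a hf
  have hAfin : Module.Finite k ↥A := by
    apply FiniteDimensional.span_of_finite
    exact Set.finite_range _
  set N : Submodule k M := A.map (LinearMap.applyₗ (R := k) m) with hN
  have hNfin : FiniteDimensional k ↥N := Module.Finite.map A _
  have hNsub : IsSubcomodule k H' ρ N := by
    intro n hn
    obtain ⟨f, hf, rfl⟩ := hn
    have hTf : ∀ g : G, ((T g * f) m) ∈ N := fun g =>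
      Submodule.mem_map.mpr ⟨T g * f, hclosure g f hf, rfl⟩
    refine LinearMap.mem_range.mpr ⟨∑ g : G, (⟨(T g * f) m, hTf g⟩ : N) ⊗ₜ[k] q g, ?_⟩
    rw [map_sum]
    simp only [LinearMap.rTensor_tmul, Submodule.coe_subtype]
    exact (rho_expand (q := q) _).symm
  have h1A : (1 : Module.End k M) ∈ A := by
    apply Submodule.subset_span
    refine ⟨⟨∅, 1⟩, ?_⟩
    show P ∅ * T 1 = 1
    rw [prodE_empty hq hρ, Tg_one' hq hρ, one_mul]
  have hmN : m ∈ N := Submodule.mem_map.mpr ⟨1, h1A, rfl⟩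
  have hNmem : N ∈ {N : Submodule k M | IsSubcomodule k H' ρ N ∧ FiniteDimensional k ↥N} :=
    ⟨hNsub, hNfin⟩
  exact le_sSup hNmem hmN

end AuxBasis

section AuxConstruct

variable {k : Type u} [Field k] {G : Type u} [Group G] [Fintype G] [DecidableEq G]
variable {K : Type u} [Ring K] [HopfAlgebra k K]
variable {H' : Type u} [Ring H'] [HopfAlgebra k H']

lemma exists_groupLikeDualBasis (e : G → K) (hK : IsGroupHopfAlgebra k K G e)
    (φ : H' ≃ₗ[k] Module.Dual k K) (hφ : IsDualHopf k K H' φ) :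
    ∃ q : Module.Basis G k H', GroupLikeDualBasis q := by
  obtain ⟨b, hb⟩ := hK.basis
  refine ⟨b.dualBasis.map φ.symm, ?_, ?_, ?_, ?_⟩
  · -- mul
    intro a c
    apply φ.injective
    apply b.ext
    intro s
    rw [hφ.mul_dual]
    have hc : Coalgebra.comul (R := k) (b s) = b s ⊗ₜ[k] b s := by
      rw [hb]; exact hK.comul_grouplike s
    rw [hc]
    simp only [TensorProduct.map_tmul, TensorProduct.lid_tmul, smul_eq_mul,
      Module.Basis.map_apply, LinearEquiv.apply_symm_apply, Module.Basis.dualBasis_apply_self,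
      apply_ite φ, map_zero, LinearMap.zero_apply,
      apply_ite (fun (f : Module.Dual k K) => f (b s))]
    split_ifs <;> simp_all
  · -- comul
    intro g
    set q := b.dualBasis.map φ.symm with hqdef
    apply ((TensorProduct.congr φ φ).trans (TensorProduct.dualDistribEquivOfBasis b b)).injective
    apply (Module.Basis.tensorProduct b b).ext
    rintro ⟨s, t⟩
    have happly : ∀ (x : H' ⊗[k] H') (y : K ⊗[k] K),
        ((TensorProduct.congr φ φ).trans (TensorProduct.dualDistribEquivOfBasis b b)) x y =
        TensorProduct.dualDistrib k K K
          (TensorProduct.map φ.toLinearMap φ.toLinearMap x) y := fun x y => rfl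
    have hmul : b s * b t = b (s * t) := by rw [hb, hb, hb]; exact hK.map_mul s t
    have h1 : φ (q g) (b (s*t)) = if s * t = g then 1 else 0 := by
      simp [hqdef, Module.Basis.dualBasis_apply_self, Finsupp.single_apply]
    rw [Module.Basis.tensorProduct_apply, happly, hφ.comul_dual, hmul, h1, map_sum,
      LinearMap.sum_apply]
    simp only [happly, TensorProduct.map_tmul, TensorProduct.dualDistrib_apply, hqdef,
      Module.Basis.map_apply, LinearEquiv.coe_coe, LinearEquiv.apply_symm_apply,
      Module.Basis.dualBasis_apply_self, ite_mul, zero_mul, one_mul,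
      Finset.sum_ite_eq, Finset.mem_univ, if_true]
    by_cases h : s * t = g
    · rw [if_pos h, if_pos (by rw [← h]; group)]
    · rw [if_neg h, if_neg (fun ht => h (by rw [ht]; group))]
  · -- counit
    intro g
    rw [hφ.counit_dual]
    have h1 : (1 : K) = b 1 := by rw [hb]; exact (hK.map_one).symm
    rw [h1]
    simp only [Module.Basis.map_apply, LinearEquiv.apply_symm_apply, Module.Basis.dualBasis_apply_self]
    by_cases h : g = 1
    · subst h; simp
    · rw [if_neg (fun ht => h ht.symm), if_neg h]
  · -- antipode
    intro g
    apply φ.injective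
    apply b.ext
    intro s
    rw [hφ.antipode_dual]
    have hS : HopfAlgebra.antipode (R := k) (b s) = b s⁻¹ := by
      rw [hb, hb]; exact hK.antipode_inv s
    rw [hS]
    simp only [Module.Basis.map_apply, LinearEquiv.apply_symm_apply, Module.Basis.dualBasis_apply_self]
    by_cases h : s = g⁻¹
    · subst h; simp
    · rw [if_neg (fun ht => h (by rw [← ht]; group)), if_neg h]

end AuxConstruct

end RegularityProof

/-- For a finite group `G`, the dual Hopf algebra `(kG)*` of the group
algebra `kG` is regular: every partial `(kG)*`-comodule is the sum of its finite-dimensional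
partial subcomodules. -/
theorem dual_groupAlgebra_regular
    (k : Type u) [Field k] (G : Type u) [Group G] [Finite G]
    (K : Type u) [Ring K] [HopfAlgebra k K]
    (e : G → K) (hK : IsGroupHopfAlgebra k K G e)
    (H' : Type u) [Ring H'] [HopfAlgebra k H']
    (φ : H' ≃ₗ[k] Module.Dual k K) (hφ : IsDualHopf k K H' φ) :
    IsRegularHopf k H' := by
  intro M iM mM ρ hρ
  letI := iM
  letI := mM
  letI := Fintype.ofFinite G
  letI := Classical.decEq G
  obtain ⟨q, hq⟩ := exists_groupLikeDualBasis e hK φ hφ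
  exact regular_main hq hρ

end

-- #print axioms dual_groupAlgebra_regular
end

section
/- Let k be an algebraically closed field of characteristic 0 and G a finite abelian group. Then the group Hopf algebra kG is regular: every partial kG-comodule is the sum of its finite-dimensional partial subcomodules. -/
open TensorProduct CategoryTheory CategoryTheory.Limits

noncomputable section

universe u

section Chars
variable (k : Type u) [Field k] [IsAlgClosed k] [CharZero k]
variable (G : Type u) [CommGroup G] [Fintype G]

lemma char_finite : Finite (G →* kˣ) := by
  classical
  let S := rootsOfUnity (Fintype.card G) k
  have hmem : ∀ (φ : G →* kˣ) (g : G), φ g ∈ S := by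
    intro φ g
    simp only [S, mem_rootsOfUnity, ← map_pow, pow_card_eq_one, map_one]
  have : Finite (G → S) := inferInstance
  refine Finite.of_injective (fun φ : G →* kˣ => fun g => (⟨φ g, hmem φ g⟩ : S)) ?_
  intro φ ψ h
  ext g
  have h2 : (⟨φ g, hmem φ g⟩ : S) = ⟨ψ g, hmem ψ g⟩ := congrFun h g
  have h3 : φ g = ψ g := congrArg Subtype.val h2
  exact congrArg Units.val h3

lemma char_sep {x y : G} (h : x ≠ y) : ∃ φ : G →* kˣ, ((φ x : kˣ) : k) ≠ ((φ y : kˣ) : k) := by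
  have h1 : x * y⁻¹ ≠ 1 := by
    intro hxy; exact h (by rwa [mul_inv_eq_one] at hxy)
  haveI : NeZero ((Monoid.exponent G : k)) :=
    ⟨by exact_mod_cast (Monoid.exponent_ne_zero_of_finite (G := G))⟩
  obtain ⟨φ, hφ⟩ := CommGroup.exists_apply_ne_one_of_hasEnoughRootsOfUnity G k h1
  refine ⟨φ, fun hc => hφ ?_⟩
  have hxy : φ x = φ y := Units.ext hc
  rw [map_mul, map_inv, hxy, mul_inv_cancel]

lemma char_span :
    Submodule.span k (Set.range fun φ : G →* kˣ => (fun g => ((φ g : kˣ) : k) : G → k)) = ⊤ := by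
  classical
  set S : Set (G → k) := Set.range fun φ : G →* kˣ => (fun g => ((φ g : kˣ) : k) : G → k) with hS
  set W := Submodule.span k S with hW
  have hmulS : ∀ u ∈ S, ∀ v ∈ S, u * v ∈ S := by
    rintro u ⟨φ, rfl⟩ v ⟨ψ, rfl⟩
    exact ⟨φ * ψ, by funext g; simp⟩
  have hmulW : ∀ u v : G → k, u ∈ W → v ∈ W → u * v ∈ W := by
    intro u v hu hv
    have hle : W * W ≤ W := by
      rw [hW, Submodule.span_mul_span]
      refine Submodule.span_le.2 ?_
      rintro x ⟨u, hu, v, hv, rfl⟩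
      exact Submodule.subset_span (hmulS u hu v hv)
    exact hle (Submodule.mul_mem_mul hu hv)
  have honeW : (1 : G → k) ∈ W := by
    refine Submodule.subset_span ⟨1, ?_⟩; funext g; simp
  have hind : ∀ x : G, (Pi.single x 1 : G → k) ∈ W := by
    intro x
    have hsep : ∀ y : G, y ≠ x → ∃ φ : G →* kˣ, ((φ x : kˣ) : k) ≠ ((φ y : kˣ) : k) :=
      fun y h => char_sep k G h.symm
    choose φ hφ using hsep
    set F : ∀ y : G, y ≠ x → (G → k) := fun y hy =>
      (((φ y hy) x : k) - ((φ y hy) y : k))⁻¹ •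
          ((fun g => (((φ y hy) g : kˣ) : k)) - ((φ y hy) y : k) • (1 : G → k)) with hF
    have hFW : ∀ (y : G) (hy : y ≠ x), F y hy ∈ W := by
      intro y hy
      refine Submodule.smul_mem _ _ (Submodule.sub_mem _ ?_ ?_)
      · exact Submodule.subset_span ⟨φ y hy, rfl⟩
      · exact Submodule.smul_mem _ _ honeW
    have hFval : ∀ (y : G) (hy : y ≠ x) (g : G),
        F y hy g = (((φ y hy) x : k) - ((φ y hy) y : k))⁻¹ *
          (((φ y hy) g : k) - ((φ y hy) y : k)) := by
      intro y hy g; simp [hF]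
    set Fd : G → (G → k) := fun y => if hy : y ≠ x then F y hy else 1 with hFd
    have hprodW : (∏ y ∈ Finset.univ.erase x, Fd y) ∈ W := by
      refine Finset.prod_induction Fd (· ∈ W) (fun a b ha hb => hmulW a b ha hb) honeW ?_
      intro y _
      by_cases hy : y ≠ x
      · simp only [hFd, dif_pos hy]; exact hFW y hy
      · simp only [hFd, dif_neg hy]; exact honeW
    have hval : (∏ y ∈ Finset.univ.erase x, Fd y) = Pi.single x 1 := by
      funext g
      rw [Finset.prod_apply]
      by_cases hg : g = x
      · rw [hg, Pi.single_eq_same]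
        refine Finset.prod_eq_one ?_
        intro y hy
        have hy' : y ≠ x := (Finset.mem_erase.1 hy).1
        simp only [hFd, dif_pos hy']
        rw [hFval y hy' x]
        have hne : ((φ y hy') x : k) - ((φ y hy') y : k) ≠ 0 :=
          sub_ne_zero.2 (hφ y hy')
        field_simp
      · rw [Pi.single_eq_of_ne hg]
        refine Finset.prod_eq_zero (Finset.mem_erase.2 ⟨hg, Finset.mem_univ g⟩) ?_
        simp only [hFd, dif_pos hg]
        rw [hFval g hg g]
        ring
    rw [← hval]; exact hprodW
  rw [eq_top_iff]
  intro f _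
  have hf : f = ∑ x : G, f x • (Pi.single x 1 : G → k) := by
    funext g
    simp [Finset.sum_apply, Pi.single_apply]
  rw [hf]
  exact Submodule.sum_mem _ fun x _ => Submodule.smul_mem _ _ (hind x)

end Chars

section Abstract
variable {k : Type u} [Field k] [IsAlgClosed k] [CharZero k]
variable {G : Type u} [CommGroup G] [Fintype G]
variable {R : Type u} [Ring R] [Algebra k R]

lemma exists_stable_submodule
    (hspan : Submodule.span k
      (Set.range fun φ : G →* kˣ => (fun g => ((φ g : kˣ) : k) : G → k)) = ⊤)
    (hfin : Finite (G →* kˣ))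
    (T : G → R)
    (hA : ∑ g : G, T g = 1)
    (hB0 : ∀ a c : G, T a * T (c⁻¹ * a) = T a * (∑ h : G, T (c * h) * T h))
    (hC0 : ∀ a c : G, T (a * c) * T c = (∑ h : G, T (a * h) * T h) * T c) :
    ∃ A₀ : Submodule k R, FiniteDimensional k ↥A₀ ∧ (1 : R) ∈ A₀ ∧
      ∀ (a : G) (x : R), x ∈ A₀ → T a * x ∈ A₀ := by
  classical
  haveI : Finite (G →* kˣ) := hfin
  haveI : Fintype (G →* kˣ) := Fintype.ofFinite _
  set P : G → R := fun c => ∑ h : G, T (c * h) * T h with hP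
  have hB : ∀ a c : G, T a * T (c⁻¹ * a) = T a * P c := hB0
  have hC : ∀ a c : G, T (a * c) * T c = P a * T c := hC0
  have hF : ∀ b c : G, T b * P c = P c * T (c⁻¹ * b) := by
    intro b c
    have h2 := hC c (c⁻¹ * b)
    rw [mul_inv_cancel_left] at h2
    rw [← h2, hB]
  have hF' : ∀ c h : G, P c * T h = T (c * h) * P c := by
    intro c h
    have h1 := hC c h
    have h2 := hB (c * h) c
    rw [inv_mul_cancel_left] at h2
    rw [← h1, ← h2]
  have hC' : ∀ a b : G, T a * T b = P (a * b⁻¹) * T b := by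
    intro a b
    have := hC (a * b⁻¹) b
    rwa [inv_mul_cancel_right] at this
  have hB2 : ∀ c h : G, T (c * h) * T h = T (c * h) * P c := by
    intro c h
    have := hB (c * h) c
    rwa [inv_mul_cancel_left] at this
  have hPP : ∀ c d : G, P c * P d = (∑ h : G, T (c * (d * h)) * T (c * h)) * P c := by
    intro c d
    calc P c * P d = ∑ h : G, P c * (T (d * h) * T h) := by
          rw [hP]; rw [Finset.mul_sum]
      _ = ∑ h : G, T (c * (d * h)) * (T (c * h) * P c) := by
          refine Finset.sum_congr rfl fun h _ => ?_
          rw [← mul_assoc, hF' c (d * h), mul_assoc, hF' c h]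
      _ = (∑ h : G, T (c * (d * h)) * T (c * h)) * P c := by
          rw [Finset.sum_mul]
          exact Finset.sum_congr rfl fun h _ => by rw [mul_assoc]
  have hPcomm : ∀ c d : G, P c * P d = P d * P c := by
    intro c d
    rw [hPP]
    congr 1
    rw [hP]
    refine (Equiv.sum_comp (Equiv.mulLeft c⁻¹) _).symm.trans ?_
    refine Finset.sum_congr rfl fun h _ => ?_
    simp only [Equiv.coe_mulLeft]
    have e1 : c * (d * (c⁻¹ * h)) = d * h := by
      rw [mul_left_comm d c⁻¹ h, mul_inv_cancel_left]
    have e2 : c * (c⁻¹ * h) = h := by rw [mul_inv_cancel_left]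
    rw [e1, e2]
  have hsumT : ∀ h : G, ∑ c : G, T (c * h) = 1 := by
    intro h
    rw [← hA]
    exact Fintype.sum_equiv (Equiv.mulRight h) _ _ fun c => rfl
  have hPPs : ∀ s : G, ∑ c : G, P c * P (c⁻¹ * s) = P s := by
    intro s
    have key : ∀ c : G, P c * P (c⁻¹ * s) = ∑ h : G, T (s * h) * (T (c * h) * T h) := by
      intro c
      rw [hPP, Finset.sum_mul]
      refine Finset.sum_congr rfl fun h _ => ?_
      have e1 : c * (c⁻¹ * s * h) = s * h := by group
      have e2 : c⁻¹ * s * h = c⁻¹ * (s * h) := by group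
      rw [e1, mul_assoc, ← hB2 c h]
    calc ∑ c : G, P c * P (c⁻¹ * s)
        = ∑ c : G, ∑ h : G, T (s * h) * (T (c * h) * T h) :=
          Finset.sum_congr rfl fun c _ => key c
      _ = ∑ h : G, T (s * h) * ((∑ c : G, T (c * h)) * T h) := by
          rw [Finset.sum_comm]
          refine Finset.sum_congr rfl fun h _ => ?_
          rw [Finset.sum_mul, Finset.mul_sum]
      _ = P s := by
          rw [hP]
          refine Finset.sum_congr rfl fun h _ => ?_
          rw [hsumT h, one_mul]
  -- characters and Fourier elements
  set χv : (G →* kˣ) → G → k := fun φ g => ((φ g : kˣ) : k) with hχv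
  have hχmul : ∀ (φ : G →* kˣ) (a b : G), χv φ (a * b) = χv φ a * χv φ b := by
    intro φ a b; simp [hχv]
  have hχmulφ : ∀ (φ ψ : G →* kˣ) (a : G), χv (φ * ψ) a = χv φ a * χv ψ a := by
    intro φ ψ a; simp [hχv]
  set ε : (G →* kˣ) → R := fun φ => ∑ c : G, χv φ c • P c with hε
  set π : (G →* kˣ) → R := fun φ => ∑ a : G, χv φ a • T a with hπ
  have expand : ∀ (f g : G → k) (A B : G → R),
      (∑ c : G, f c • A c) * (∑ d : G, g d • B d)
        = ∑ c : G, ∑ d : G, (f c * g d) • (A c * B d) := by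
    intro f g A B
    rw [Finset.sum_mul]
    refine Finset.sum_congr rfl fun c _ => ?_
    rw [Finset.mul_sum]
    refine Finset.sum_congr rfl fun d _ => ?_
    rw [smul_mul_assoc, mul_smul_comm, smul_smul]
  have hπone : π 1 = 1 := by
    rw [hπ]
    simp only [hχv, MonoidHom.one_apply, Units.val_one, one_smul]
    exact hA
  have hεidem : ∀ φ : G →* kˣ, ε φ * ε φ = ε φ := by
    intro φ
    calc ε φ * ε φ = ∑ c : G, ∑ d : G, (χv φ c * χv φ d) • (P c * P d) := by
          rw [hε]; exact expand _ _ _ _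
      _ = ∑ c : G, ∑ s : G, χv φ s • (P c * P (c⁻¹ * s)) := by
          refine Finset.sum_congr rfl fun c _ => ?_
          refine ((Equiv.sum_comp (Equiv.mulLeft c⁻¹)
            (fun d => (χv φ c * χv φ d) • (P c * P d))).symm).trans ?_
          refine Finset.sum_congr rfl fun s _ => ?_
          simp only [Equiv.coe_mulLeft]
          congr 1
          rw [← hχmul, mul_inv_cancel_left]
      _ = ∑ s : G, χv φ s • (∑ c : G, P c * P (c⁻¹ * s)) := by
          rw [Finset.sum_comm]
          exact Finset.sum_congr rfl fun s _ => (Finset.smul_sum).symm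
      _ = ε φ := by
          rw [hε]
          exact Finset.sum_congr rfl fun s _ => by rw [hPPs s]
  have hεcomm : ∀ φ ψ : G →* kˣ, ε φ * ε ψ = ε ψ * ε φ := by
    intro φ ψ
    calc ε φ * ε ψ = ∑ c : G, ∑ d : G, (χv φ c * χv ψ d) • (P c * P d) := by
          rw [hε]; exact expand _ _ _ _
      _ = ∑ d : G, ∑ c : G, (χv ψ d * χv φ c) • (P d * P c) := by
          rw [Finset.sum_comm]
          refine Finset.sum_congr rfl fun d _ => Finset.sum_congr rfl fun c _ => ?_
          rw [mul_comm (χv φ c), hPcomm]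
      _ = ε ψ * ε φ := by rw [hε]; exact (expand _ _ _ _).symm
  have hπε : ∀ τ μ : G →* kˣ, π τ * ε μ = ε (μ * τ) * π τ := by
    intro τ μ
    calc π τ * ε μ = ∑ b : G, ∑ c : G, (χv τ b * χv μ c) • (T b * P c) := by
          rw [hπ, hε]; exact expand _ _ _ _
      _ = ∑ c : G, ∑ b : G, (χv (μ * τ) c * χv τ b) • (P c * T b) := by
          rw [Finset.sum_comm]
          refine Finset.sum_congr rfl fun c _ => ?_
          refine ((Equiv.sum_comp (Equiv.mulLeft c)
            (fun b => (χv τ b * χv μ c) • (T b * P c))).symm).trans ?_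
          refine Finset.sum_congr rfl fun b _ => ?_
          simp only [Equiv.coe_mulLeft]
          rw [hF, inv_mul_cancel_left]
          congr 1
          rw [hχmul, hχmulφ]
          ring
      _ = ε (μ * τ) * π τ := by rw [hε, hπ]; exact (expand _ _ _ _).symm
  have hππ : ∀ φ ψ : G →* kˣ, π φ * π ψ = ε φ * π (φ * ψ) := by
    intro φ ψ
    calc π φ * π ψ = ∑ a : G, ∑ b : G, (χv φ a * χv ψ b) • (T a * T b) := by
          rw [hπ]; exact expand _ _ _ _
      _ = ∑ b : G, ∑ a : G, (χv φ a * χv ψ b) • (T a * T b) := Finset.sum_comm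
      _ = ∑ b : G, ∑ c : G, (χv φ c * χv (φ * ψ) b) • (P c * T b) := by
          refine Finset.sum_congr rfl fun b _ => ?_
          refine ((Equiv.sum_comp (Equiv.mulRight b)
            (fun a => (χv φ a * χv ψ b) • (T a * T b))).symm).trans ?_
          refine Finset.sum_congr rfl fun c _ => ?_
          simp only [Equiv.coe_mulRight]
          rw [hC', mul_inv_cancel_right]
          congr 1
          rw [hχmul, hχmulφ]
          ring
      _ = ∑ c : G, ∑ b : G, (χv φ c * χv (φ * ψ) b) • (P c * T b) := Finset.sum_comm
      _ = ε φ * π (φ * ψ) := by rw [hε, hπ]; exact (expand _ _ _ _).symm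
  -- Fourier inversion: each T a lies in the span of the π φ
  set L : (G → k) →ₗ[k] R :=
    { toFun := fun f => ∑ g : G, f g • T g
      map_add' := by
        intro f g; simp [add_smul, Finset.sum_add_distrib]
      map_smul' := by
        intro r f; simp [Finset.smul_sum, mul_smul] } with hL
  have happ : ∀ f : G → k, L f = ∑ g : G, f g • T g := fun f => rfl
  have hLχ : ∀ φ : G →* kˣ, L (χv φ) = π φ := by
    intro φ; rw [happ, hπ]
  have hLδ : ∀ a : G, L (Pi.single a (1 : k)) = T a := by
    intro a
    rw [happ, Finset.sum_eq_single a]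
    · rw [Pi.single_eq_same, one_smul]
    · intro g _ hg
      rw [Pi.single_eq_of_ne hg, zero_smul]
    · intro h; exact absurd (Finset.mem_univ a) h
  have hTspan : ∀ a : G, T a ∈ Submodule.span k (Set.range π) := by
    intro a
    have h1 : Pi.single a (1 : k) ∈ Submodule.span k (Set.range χv) := by
      rw [hχv, hspan]; trivial
    have h2 : L (Pi.single a (1 : k)) ∈ Submodule.map L (Submodule.span k (Set.range χv)) :=
      Submodule.mem_map_of_mem h1
    rw [Submodule.map_span] at h2
    rw [hLδ] at h2
    have hcomp : (⇑L ∘ χv) = π := funext hLχ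
    have h3 : L '' Set.range χv = Set.range π := by
      rw [← Set.range_comp, hcomp]
    rwa [h3] at h2
  -- commutative monoid of products of the idempotents ε φ
  set Sε : Set R := Set.range ε with hSε
  have hSZ : Sε ⊆ (Submonoid.centralizer Sε : Set R) := by
    rintro x ⟨φ, rfl⟩
    rw [SetLike.mem_coe, Submonoid.mem_centralizer_iff]
    rintro y ⟨ψ, rfl⟩
    exact hεcomm ψ φ
  set Cm : Submonoid R := Submonoid.centralizer (Submonoid.centralizer Sε : Set R) with hCm
  have hSC : Sε ⊆ (Cm : Set R) := by
    intro x hx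
    rw [hCm, SetLike.mem_coe, Submonoid.mem_centralizer_iff]
    intro z hz
    rw [SetLike.mem_coe, Submonoid.mem_centralizer_iff] at hz
    exact (hz x hx).symm
  have hCZ : (Cm : Set R) ⊆ (Submonoid.centralizer Sε : Set R) := by
    intro x hx
    rw [SetLike.mem_coe, Submonoid.mem_centralizer_iff]
    intro s hs
    rw [hCm, SetLike.mem_coe, Submonoid.mem_centralizer_iff] at hx
    exact hx s (hSZ hs)
  letI commCm : CommMonoid Cm :=
    { (inferInstance : Monoid Cm) with
      mul_comm := by
        rintro ⟨x, hx⟩ ⟨y, hy⟩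
        have hyZ : y ∈ (Submonoid.centralizer Sε : Set R) := hCZ hy
        have := by
          rw [hCm, Submonoid.mem_centralizer_iff] at hx
          exact hx y hyZ
        exact Subtype.ext this.symm }
  set εC : (G →* kˣ) → Cm := fun φ => ⟨ε φ, hSC ⟨φ, rfl⟩⟩ with hεC
  have hεCidem : ∀ φ, εC φ * εC φ = εC φ := fun φ => Subtype.ext (hεidem φ)
  set E : Finset (G →* kˣ) → Cm := fun s => ∏ φ ∈ s, εC φ with hE
  have hEs : ∀ s : Finset (G →* kˣ), E s = ∏ φ ∈ s, εC φ := fun s => rfl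
  have hEabsorb : ∀ (s : Finset (G →* kˣ)) (φ : G →* kˣ), E s * εC φ = E (insert φ s) := by
    intro s φ
    by_cases hφ : φ ∈ s
    · rw [Finset.insert_eq_self.2 hφ]
      have h1 : E s = εC φ * ∏ ψ ∈ s.erase φ, εC ψ := by
        rw [hEs]; exact (Finset.mul_prod_erase s εC hφ).symm
      rw [h1, mul_comm (εC φ), mul_assoc, hεCidem]
    · rw [hEs, hEs, Finset.prod_insert hφ, mul_comm (εC φ)]
  have hπE : ∀ (σ : G →* kˣ) (s : Finset (G →* kˣ)),
      π σ * ((E s : Cm) : R) = ((E (s.image (· * σ)) : Cm) : R) * π σ := by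
    intro σ s
    induction s using Finset.induction_on with
    | empty =>
        rw [Finset.image_empty, hEs, Finset.prod_empty, OneMemClass.coe_one, one_mul, mul_one]
    | insert φ s' hφ ih =>
        rw [Finset.image_insert]
        have h1 : ((E (insert φ s') : Cm) : R) = ε φ * ((E s' : Cm) : R) := by
          rw [hEs, Finset.prod_insert hφ, ← hEs]
          rfl
        have h2 : ((E (insert (φ * σ) (s'.image (· * σ))) : Cm) : R)
            = ε (φ * σ) * ((E (s'.image (· * σ)) : Cm) : R) := by
          rw [← hEabsorb, mul_comm]
          rfl
        rw [h1, h2, ← mul_assoc, hπε σ φ, mul_assoc, ih, ← mul_assoc]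
  -- the finite-dimensional stable submodule
  set Fgen : Finset (G →* kˣ) × (G →* kˣ) → R :=
    fun p => ((E p.1 : Cm) : R) * π p.2 with hFgen
  refine ⟨Submodule.span k (Set.range Fgen), ?_, ?_, ?_⟩
  · exact FiniteDimensional.span_of_finite k (Set.finite_range Fgen)
  · refine Submodule.subset_span ⟨(∅, 1), ?_⟩
    have h0 : Fgen (∅, (1 : G →* kˣ)) = ((E ∅ : Cm) : R) * π 1 := rfl
    rw [h0, hEs, Finset.prod_empty, hπone, OneMemClass.coe_one, one_mul]
  · intro a x hx
    -- first: stability under left multiplication by π σ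
    have hπA : ∀ (σ : G →* kˣ) (y : R), y ∈ Submodule.span k (Set.range Fgen) →
        π σ * y ∈ Submodule.span k (Set.range Fgen) := by
      intro σ y hy
      induction hy using Submodule.span_induction with
      | mem y hy =>
          obtain ⟨⟨s, τ⟩, rfl⟩ := hy
          refine Submodule.subset_span ⟨(insert σ (s.image (· * σ)), σ * τ), ?_⟩
          have hg1 : Fgen (s, τ) = ((E s : Cm) : R) * π τ := rfl
          have hg2 : Fgen (insert σ (s.image (· * σ)), σ * τ)
              = ((E (insert σ (s.image (· * σ))) : Cm) : R) * π (σ * τ) := rfl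
          rw [hg1, hg2]
          have step1 : π σ * (((E s : Cm) : R) * π τ)
              = ((E (s.image (· * σ)) : Cm) : R) * (π σ * π τ) := by
            rw [← mul_assoc, hπE, mul_assoc]
          have step2 : ((E (s.image (· * σ)) : Cm) : R) * (π σ * π τ)
              = (((E (s.image (· * σ)) : Cm) : R) * ε σ) * π (σ * τ) := by
            rw [hππ, ← mul_assoc]
          have step3 : (((E (s.image (· * σ)) : Cm) : R) * ε σ)
              = ((E (insert σ (s.image (· * σ))) : Cm) : R) := by
            rw [← hEabsorb]
            rfl
          rw [step1, step2, step3]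
      | zero => rw [mul_zero]; exact Submodule.zero_mem _
      | add y z _ _ hy hz =>
          rw [mul_add]; exact Submodule.add_mem _ hy hz
      | smul r y _ hy =>
          rw [mul_smul_comm]; exact Submodule.smul_mem _ r hy
    -- then T a ∈ span (range π) finishes
    have hcomap : Submodule.span k (Set.range π) ≤
        (Submodule.span k (Set.range Fgen)).comap (LinearMap.mulRight k x) := by
      refine Submodule.span_le.2 ?_
      rintro y ⟨σ, rfl⟩
      have hmem : (LinearMap.mulRight k x) (π σ) ∈ Submodule.span k (Set.range Fgen) := by
        rw [LinearMap.mulRight_apply]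
        exact hπA σ x hx
      exact Submodule.mem_comap.2 hmem
    have hfin2 := hcomap (hTspan a)
    rw [Submodule.mem_comap, LinearMap.mulRight_apply] at hfin2
    exact hfin2
end Abstract

section ComodAux
variable {k : Type u} [Field k] {K : Type u} [Ring K] [HopfAlgebra k K]
variable {G : Type u} [CommGroup G] [Fintype G] [DecidableEq G]
variable (b : Module.Basis G k K)

/-- Coordinate projection on the last tensor factor relative to the basis `b`. -/
def piB (X : Type u) [AddCommGroup X] [Module k X] (g : G) : X ⊗[k] K →ₗ[k] X :=
  (TensorProduct.rid k X).toLinearMap ∘ₗ LinearMap.lTensor X (b.coord g)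

variable {X : Type u} [AddCommGroup X] [Module k X]

lemma piB_tmul (g : G) (x : X) (y : K) : piB b X g (x ⊗ₜ[k] y) = b.repr y g • x := by
  simp [piB, Module.Basis.coord]

lemma piB_tmul_basis (g h : G) (x : X) :
    piB b X g (x ⊗ₜ[k] b h) = if h = g then x else 0 := by
  rw [piB_tmul, Module.Basis.repr_self, Finsupp.single_apply]
  split_ifs with h1 <;> simp

lemma sum_piB (x : X ⊗[k] K) : ∑ g : G, (piB b X g x) ⊗ₜ[k] b g = x := by
  induction x using TensorProduct.induction_on with
  | zero => simp
  | tmul x y =>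
      calc ∑ g : G, (piB b X g (x ⊗ₜ[k] y)) ⊗ₜ[k] b g
          = ∑ g : G, x ⊗ₜ[k] (b.repr y g • b g) := by
            refine Finset.sum_congr rfl fun g _ => ?_
            rw [piB_tmul, TensorProduct.smul_tmul]
        _ = x ⊗ₜ[k] y := by
            rw [← TensorProduct.tmul_sum, b.sum_repr]
  | add x y hx hy =>
      simp only [map_add, TensorProduct.add_tmul, Finset.sum_add_distrib, hx, hy]

variable {M : Type u} [AddCommGroup M] [Module k M] (ρ : M →ₗ[k] M ⊗[k] K)

/-- The coordinate operators of a coaction. -/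
def Tb (g : G) : Module.End k M := piB b M g ∘ₗ ρ

lemma rho_apply (m : M) : ρ m = ∑ g : G, (Tb b ρ g m) ⊗ₜ[k] b g := (sum_piB b (ρ m)).symm

lemma mulLast_tmul_s13 (x : X) (y z : K) :
    mulLast k K X ((x ⊗ₜ[k] y) ⊗ₜ[k] z) = x ⊗ₜ[k] (y * z) := by
  simp [mulLast]

lemma antLast_tmul_s13 (x : X) (y : K) :
    antLast k K X (x ⊗ₜ[k] y) = x ⊗ₜ[k] (HopfAlgebra.antipode (R := k) y) := by
  simp [antLast]

lemma counitLast_tmul_s13 (x : X) (y : K) :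
    counitLast k K X (x ⊗ₜ[k] y) = Coalgebra.counit (R := k) y • x := by
  simp [counitLast]

lemma comulLast_tmul_basis
    (hcomul : ∀ g : G, Coalgebra.comul (R := k) (b g) = b g ⊗ₜ[k] b g)
    (x : X) (g : G) :
    comulLast k K X (x ⊗ₜ[k] b g) = (x ⊗ₜ[k] b g) ⊗ₜ[k] b g := by
  simp [comulLast, hcomul g]

/-- Extract the coordinate of `b a ⊗ b c` in the last two tensor factors. -/
def psiB (a c : G) : (M ⊗[k] K) ⊗[k] K →ₗ[k] M :=
  piB b M a ∘ₗ piB b (M ⊗[k] K) c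

lemma psiB_tmul (a c g h : G) (x : M) :
    psiB b (M := M) a c ((x ⊗ₜ[k] b g) ⊗ₜ[k] b h)
      = if h = c then (if g = a then x else 0) else 0 := by
  rw [psiB, LinearMap.comp_apply, piB_tmul_basis]
  by_cases h1 : h = c
  · rw [if_pos h1, if_pos h1, piB_tmul_basis]
  · rw [if_neg h1, if_neg h1, map_zero]

lemma sumIteCollapse {V : Type u} [AddCommGroup V] (v : G → V) (a : G) :
    (∑ h : G, if h = a then v h else 0) = v a := by simp

lemma ite_swap' {V : Type u} [AddCommGroup V] (P Q : Prop) [Decidable P] [Decidable Q] (v : V) :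
    (if P then (if Q then v else 0) else 0) = if Q then (if P then v else 0) else 0 := by
  split_ifs <;> rfl

lemma relA (hcounit : ∀ g : G, Coalgebra.counit (R := k) (b g) = (1 : k))
    (hρ : IsPartialComodule k K ρ) :
    ∑ g : G, Tb b ρ g = (1 : Module.End k M) := by
  apply LinearMap.ext; intro m
  have h0 := DFunLike.congr_fun hρ.counit m
  rw [LinearMap.comp_apply, rho_apply b ρ m, map_sum] at h0
  simp only [counitLast_tmul_s13, hcounit, one_smul] at h0
  simpa [LinearMap.sum_apply] using h0

lemma relB
    (hbmul : ∀ g h : G, b g * b h = b (g * h))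
    (hcomul : ∀ g : G, Coalgebra.comul (R := k) (b g) = b g ⊗ₜ[k] b g)
    (hanti : ∀ g : G, HopfAlgebra.antipode (R := k) (b g) = b g⁻¹)
    (hρ : IsPartialComodule k K ρ) (a c : G) :
    Tb b ρ a * Tb b ρ (c⁻¹ * a) = Tb b ρ a * (∑ h : G, Tb b ρ (c * h) * Tb b ρ h) := by
  apply LinearMap.ext; intro m
  have h0 := DFunLike.congr_fun hρ.pcm2 m
  simp only [LinearMap.comp_apply] at h0
  have hX1 : LinearMap.rTensor K ρ (ρ m)
      = ∑ g : G, ∑ h : G, ((Tb b ρ h (Tb b ρ g m)) ⊗ₜ[k] b h) ⊗ₜ[k] b g := by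
    rw [rho_apply b ρ m, map_sum]
    refine Finset.sum_congr rfl fun g _ => ?_
    rw [LinearMap.rTensor_tmul, rho_apply b ρ (Tb b ρ g m), TensorProduct.sum_tmul]
  rw [hX1] at h0
  simp only [map_sum, LinearMap.rTensor_tmul, rho_apply b ρ, TensorProduct.sum_tmul,
    comulLast_tmul_basis b hcomul, antLast_tmul_s13, hanti, mulLast_tmul_s13, hbmul] at h0
  have h1 := congrArg (psiB b (M := M) a c) h0
  simp only [map_sum, psiB_tmul] at h1
  -- collapse left side
  have hLc : (∑ g : G, ∑ h : G,
        if h * g⁻¹ = c then (if h = a then Tb b ρ h (Tb b ρ g m) else 0) else 0)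
      = Tb b ρ a (Tb b ρ (c⁻¹ * a) m) := by
    calc (∑ g : G, ∑ h : G,
        if h * g⁻¹ = c then (if h = a then Tb b ρ h (Tb b ρ g m) else 0) else 0)
        = ∑ g : G, if a * g⁻¹ = c then Tb b ρ a (Tb b ρ g m) else 0 := by
          refine Finset.sum_congr rfl fun g _ => ?_
          rw [Finset.sum_congr rfl fun h _ => ite_swap' (h * g⁻¹ = c) (h = a) _,
            sumIteCollapse (fun h => if h * g⁻¹ = c then Tb b ρ h (Tb b ρ g m) else 0) a]
      _ = ∑ g : G, if g = c⁻¹ * a then Tb b ρ a (Tb b ρ g m) else 0 := by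
          refine Finset.sum_congr rfl fun g _ => ?_
          refine if_congr ?_ rfl rfl
          constructor
          · intro h; rw [← h]; group
          · intro h; rw [h]; group
      _ = Tb b ρ a (Tb b ρ (c⁻¹ * a) m) :=
          sumIteCollapse (fun g => Tb b ρ a (Tb b ρ g m)) (c⁻¹ * a)
  -- collapse right side
  have hRc : (∑ g : G, ∑ h : G, ∑ l : G,
        if h * g⁻¹ = c then (if l = a then Tb b ρ l (Tb b ρ h (Tb b ρ g m)) else 0) else 0)
      = ∑ g : G, Tb b ρ a (Tb b ρ (c * g) (Tb b ρ g m)) := by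
    calc (∑ g : G, ∑ h : G, ∑ l : G,
        if h * g⁻¹ = c then (if l = a then Tb b ρ l (Tb b ρ h (Tb b ρ g m)) else 0) else 0)
        = ∑ g : G, ∑ h : G,
            if h * g⁻¹ = c then Tb b ρ a (Tb b ρ h (Tb b ρ g m)) else 0 := by
          refine Finset.sum_congr rfl fun g _ => Finset.sum_congr rfl fun h _ => ?_
          rw [Finset.sum_congr rfl fun l _ => ite_swap' (h * g⁻¹ = c) (l = a) _,
            sumIteCollapse (fun l => if h * g⁻¹ = c then Tb b ρ l (Tb b ρ h (Tb b ρ g m)) else 0) a]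
      _ = ∑ g : G, ∑ h : G, if h = c * g then Tb b ρ a (Tb b ρ h (Tb b ρ g m)) else 0 := by
          refine Finset.sum_congr rfl fun g _ => Finset.sum_congr rfl fun h _ => ?_
          refine if_congr ?_ rfl rfl
          constructor
          · intro hh; rw [← hh]; group
          · intro hh; rw [hh]; group
      _ = ∑ g : G, Tb b ρ a (Tb b ρ (c * g) (Tb b ρ g m)) :=
          Finset.sum_congr rfl fun g _ =>
            sumIteCollapse (fun h => Tb b ρ a (Tb b ρ h (Tb b ρ g m))) (c * g)
  rw [hLc, hRc] at h1
  rw [Module.End.mul_apply, Module.End.mul_apply, LinearMap.sum_apply, map_sum]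
  rw [h1]
  exact Finset.sum_congr rfl fun g _ => by rw [Module.End.mul_apply]

lemma relC
    (hbmul : ∀ g h : G, b g * b h = b (g * h))
    (hcomul : ∀ g : G, Coalgebra.comul (R := k) (b g) = b g ⊗ₜ[k] b g)
    (hanti : ∀ g : G, HopfAlgebra.antipode (R := k) (b g) = b g⁻¹)
    (hρ : IsPartialComodule k K ρ) (a c : G) :
    Tb b ρ (a * c) * Tb b ρ c = (∑ h : G, Tb b ρ (a * h) * Tb b ρ h) * Tb b ρ c := by
  apply LinearMap.ext; intro m
  have h0 := DFunLike.congr_fun hρ.pcm3 m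
  simp only [LinearMap.comp_apply] at h0
  have hX1 : LinearMap.rTensor K ρ (ρ m)
      = ∑ g : G, ∑ h : G, ((Tb b ρ h (Tb b ρ g m)) ⊗ₜ[k] b h) ⊗ₜ[k] b g := by
    rw [rho_apply b ρ m, map_sum]
    refine Finset.sum_congr rfl fun g _ => ?_
    rw [LinearMap.rTensor_tmul, rho_apply b ρ (Tb b ρ g m), TensorProduct.sum_tmul]
  rw [hX1] at h0
  simp only [map_sum, LinearMap.rTensor_tmul, rho_apply b ρ, TensorProduct.sum_tmul,
    comulLast_tmul_basis b hcomul, antLast_tmul_s13, hanti, mulLast_tmul_s13, hbmul] at h0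
  have h1 := congrArg (psiB b (M := M) a c) h0
  simp only [map_sum, psiB_tmul] at h1
  have hLc : (∑ g : G, ∑ h : G,
        if g = c then (if h * g⁻¹ = a then Tb b ρ h (Tb b ρ g m) else 0) else 0)
      = Tb b ρ (a * c) (Tb b ρ c m) := by
    calc (∑ g : G, ∑ h : G,
        if g = c then (if h * g⁻¹ = a then Tb b ρ h (Tb b ρ g m) else 0) else 0)
        = ∑ g : G, ∑ h : G,
            if g = c then (if h = a * g then Tb b ρ h (Tb b ρ g m) else 0) else 0 := by
          refine Finset.sum_congr rfl fun g _ => Finset.sum_congr rfl fun h _ => ?_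
          refine if_congr Iff.rfl (if_congr ?_ rfl rfl) rfl
          constructor
          · intro hh; rw [← hh]; group
          · intro hh; rw [hh]; group
      _ = ∑ g : G, if g = c then Tb b ρ (a * g) (Tb b ρ g m) else 0 := by
          refine Finset.sum_congr rfl fun g _ => ?_
          by_cases hg : g = c
          · rw [Finset.sum_congr rfl fun h _ => if_pos hg, if_pos hg]
            exact sumIteCollapse (fun h => Tb b ρ h (Tb b ρ g m)) (a * g)
          · rw [Finset.sum_congr rfl fun h _ => if_neg hg, if_neg hg, Finset.sum_const_zero]
      _ = Tb b ρ (a * c) (Tb b ρ c m) :=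
          sumIteCollapse (fun g => Tb b ρ (a * g) (Tb b ρ g m)) c
  have hRc : (∑ g : G, ∑ h : G, ∑ l : G,
        if g = c then (if l * h⁻¹ = a then Tb b ρ l (Tb b ρ h (Tb b ρ g m)) else 0) else 0)
      = ∑ h : G, Tb b ρ (a * h) (Tb b ρ h (Tb b ρ c m)) := by
    calc (∑ g : G, ∑ h : G, ∑ l : G,
        if g = c then (if l * h⁻¹ = a then Tb b ρ l (Tb b ρ h (Tb b ρ g m)) else 0) else 0)
        = ∑ g : G, ∑ h : G,
            if g = c then Tb b ρ (a * h) (Tb b ρ h (Tb b ρ g m)) else 0 := by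
          refine Finset.sum_congr rfl fun g _ => Finset.sum_congr rfl fun h _ => ?_
          by_cases hg : g = c
          · rw [if_pos hg]
            have : ∀ l : G, (if g = c then (if l * h⁻¹ = a
                then Tb b ρ l (Tb b ρ h (Tb b ρ g m)) else 0) else 0)
                = if l = a * h then Tb b ρ l (Tb b ρ h (Tb b ρ g m)) else 0 := by
              intro l
              rw [if_pos hg]
              refine if_congr ?_ rfl rfl
              constructor
              · intro hh; rw [← hh]; group
              · intro hh; rw [hh]; group
            rw [Finset.sum_congr rfl fun l _ => this l,
              sumIteCollapse (fun l => Tb b ρ l (Tb b ρ h (Tb b ρ g m))) (a * h)]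
          · rw [if_neg hg]
            refine Finset.sum_eq_zero fun l _ => by rw [if_neg hg]
      _ = ∑ h : G, Tb b ρ (a * h) (Tb b ρ h (Tb b ρ c m)) := by
          rw [Finset.sum_comm]
          exact Finset.sum_congr rfl fun h _ =>
            sumIteCollapse (fun g => Tb b ρ (a * h) (Tb b ρ h (Tb b ρ g m))) c
  rw [hLc, hRc] at h1
  rw [Module.End.mul_apply, Module.End.mul_apply, LinearMap.sum_apply]
  rw [h1]
  exact Finset.sum_congr rfl fun g _ => by rw [Module.End.mul_apply]

end ComodAux

/-- Over an algebraically closed field of characteristic zero, the group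
Hopf algebra `kG` of a finite abelian group `G` is regular: every partial `kG`-comodule is
the sum of its finite-dimensional partial subcomodules. -/
theorem groupAlgebra_regular_of_finite_abelian
    (k : Type u) [Field k] [IsAlgClosed k] [CharZero k]
    (G : Type u) [CommGroup G] [Finite G]
    (K : Type u) [Ring K] [HopfAlgebra k K]
    (e : G → K) (hK : IsGroupHopfAlgebra k K G e) :
    IsRegularHopf k K := by
  classical
  haveI : Fintype G := Fintype.ofFinite G
  intro M iM mM ρ hρ
  obtain ⟨b, hb⟩ := hK.basis
  have hbmul : ∀ g h : G, b g * b h = b (g * h) := by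
    intro g h; rw [hb, hb, hb]; exact hK.map_mul g h
  have hcomul : ∀ g : G, Coalgebra.comul (R := k) (b g) = b g ⊗ₜ[k] b g := by
    intro g; rw [hb]; exact hK.comul_grouplike g
  have hcounit : ∀ g : G, Coalgebra.counit (R := k) (b g) = (1 : k) := by
    intro g; rw [hb]; exact hK.counit_grouplike g
  have hanti : ∀ g : G, HopfAlgebra.antipode (R := k) (b g) = b g⁻¹ := by
    intro g; rw [hb, hb]; exact hK.antipode_inv g
  have hA := relA b ρ hcounit hρ
  obtain ⟨A₀, hfd, hone, hstab⟩ :=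
    exists_stable_submodule (R := Module.End k M) (char_span k G) (char_finite k G)
      (Tb b ρ) hA (fun a c => relB b ρ hbmul hcomul hanti hρ a c)
      (fun a c => relC b ρ hbmul hcomul hanti hρ a c)
  rw [IsRegularComodule, eq_top_iff]
  intro m _
  set N : Submodule k M := A₀.map (LinearMap.applyₗ (R := k) m) with hN
  have hTN : ∀ (g : G) (n : M), n ∈ N → Tb b ρ g n ∈ N := by
    rintro g n ⟨x, hx, rfl⟩
    exact ⟨Tb b ρ g * x, hstab g x hx, rfl⟩
  have hmN : m ∈ N := ⟨1, hone, by simp⟩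
  have hsub : IsSubcomodule k K ρ N := by
    intro n hn
    refine ⟨∑ g : G, (⟨Tb b ρ g n, hTN g n hn⟩ : N) ⊗ₜ[k] b g, ?_⟩
    rw [map_sum]
    simp only [LinearMap.rTensor_tmul, Submodule.coe_subtype]
    exact (rho_apply b ρ n).symm
  haveI hfdN : FiniteDimensional k ↥N := by
    rw [hN]
    exact Module.Finite.map A₀ (LinearMap.applyₗ (R := k) m)
  have hNin : N ∈ { N : Submodule k M | IsSubcomodule k K ρ N ∧ FiniteDimensional k ↥N } :=
    ⟨hsub, hfdN⟩
  exact le_sSup hNin hmN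

end
end
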